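/- arXiv:1906.05100 — 5 statements merged into one kernel-verified Lean document; each statement's English description precedes it below -/
import Mathlib

section
/- Let Γ be an (n,d,λ)-graph and let k ≥ 1 be an integer. Then | h_{C_{2k+1}}(Γ) − d^{2k+1} | ≤ λ · h_{C_{2k}}(Γ). -/
open Finset SimpleGraph

/-- `Γ` is an `(n,d,λ)`-graph on its vertex type `V` (with `n = Fintype.card V` as a
separate hypothesis): `Γ` is `d`-regular and all eigenvalues of its adjacency matrix,
except one eigenvalue equal to `d`, have absolute value at most `lam`. -/
def IsNDLGraph {V : Type} [Fintype V] [DecidableEq V] (Γ : SimpleGraph V)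
    [DecidableRel Γ.Adj] (d : ℕ) (lam : ℝ) : Prop :=
  Γ.IsRegularOfDegree d ∧
    ∃ (hA : (Γ.adjMatrix ℝ).IsHermitian) (i₀ : V),
      hA.eigenvalues i₀ = d ∧ ∀ i : V, i ≠ i₀ → |hA.eigenvalues i| ≤ lam

/-- `h_H(G)`: the number of homomorphisms from `H` to `G`. -/
noncomputable def homCount {W V : Type} (H : SimpleGraph W) (G : SimpleGraph V) : ℕ :=
  Nat.card (H →g G)

section Aux

variable {V : Type} [Fintype V] [DecidableEq V]

lemma aux_trace_pow_eq_sum_eigenvalues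
    (A : Matrix V V ℝ) (hA : A.IsHermitian) (m : ℕ) :
    (A ^ m).trace = ∑ i : V, (hA.eigenvalues i) ^ m := by
  set U : Matrix V V ℝ := (hA.eigenvectorUnitary : Matrix V V ℝ)
  set D : Matrix V V ℝ := Matrix.diagonal (RCLike.ofReal ∘ hA.eigenvalues)
  have hU1 : star U * U = 1 := (Matrix.mem_unitaryGroup_iff').mp hA.eigenvectorUnitary.2
  have hU2 : U * star U = 1 := (Matrix.mem_unitaryGroup_iff).mp hA.eigenvectorUnitary.2
  have key : A ^ m = U * D ^ m * star U := by
    induction m with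
    | zero => simp [hU2]
    | succ m ih =>
        conv_lhs => rw [pow_succ, ih, hA.spectral_theorem]
        rw [pow_succ]
        simp only [U, D, Unitary.conjStarAlgAut_apply, Matrix.mul_assoc]
        rw [← Matrix.mul_assoc (star _) _, hU1, Matrix.one_mul]
  rw [key, Matrix.trace_mul_cycle, hU1, Matrix.one_mul,
    Matrix.diagonal_pow, Matrix.trace_diagonal]
  simp

lemma aux_pow_apply_chain (A : Matrix V V ℝ) : ∀ (m : ℕ) (u v : V),
    (A ^ (m + 1)) u v =
      ∑ f : Fin m → V, (∏ i : Fin m,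
          A ((Fin.cons u f : Fin (m+1) → V) i.castSucc) ((Fin.cons u f : Fin (m+1) → V) i.succ))
        * A ((Fin.cons u f : Fin (m+1) → V) (Fin.last m)) v := by
  intro m
  induction m with
  | zero => intro u v; simp
  | succ m ih =>
      intro u v
      rw [pow_succ, Matrix.mul_apply]
      simp only [ih, Finset.sum_mul]
      rw [← Equiv.sum_comp (Fin.snocEquiv (fun _ : Fin (m+1) => V)), Fintype.sum_prod_type]
      refine Finset.sum_congr rfl fun x _ => Finset.sum_congr rfl fun f _ => ?_
      have hcs : (Fin.cons u (Fin.snocEquiv (fun _ : Fin (m+1) => V) (x, f)) : Fin (m+2) → V)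
          = Fin.snoc (Fin.cons u f : Fin (m+1) → V) x := by
        funext j
        show (Fin.cons u (Fin.snoc f x : Fin (m+1) → V) : Fin (m+2) → V) j = _
        rw [Fin.cons_snoc_eq_snoc_cons]
      rw [hcs, Fin.prod_univ_castSucc]
      simp only [Fin.snoc_castSucc, Fin.snoc_last, Fin.succ_castSucc, Fin.succ_last]

lemma aux_trace_pow_cyclic (A : Matrix V V ℝ) (m : ℕ) :
    (A ^ (m + 1)).trace = ∑ g : Fin (m + 1) → V, ∏ i : Fin (m + 1), A (g i) (g (i + 1)) := by
  rw [← Equiv.sum_comp (Fin.consEquiv (fun _ : Fin (m+1) => V)), Fintype.sum_prod_type,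
    Matrix.trace]
  refine Finset.sum_congr rfl fun u _ => ?_
  rw [Matrix.diag_apply, aux_pow_apply_chain]
  refine Finset.sum_congr rfl fun f _ => ?_
  have : ∀ j : Fin (m+1), (Fin.consEquiv (fun _ : Fin (m+1) => V) (u, f)) j
      = (Fin.cons u f : Fin (m+1) → V) j := fun j => rfl
  simp only [this]
  rw [Fin.prod_univ_castSucc]
  congr 1
  · exact Finset.prod_congr rfl fun j _ => by rw [Fin.coeSucc_eq_succ]
  · rw [Fin.last_add_one, Fin.cons_zero]

/-- Homs from the cycle graph correspond to cyclic sequences of adjacent vertices. -/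
def cycHomEquiv (Γ : SimpleGraph V) (m : ℕ) :
    (cycleGraph (m + 2) →g Γ) ≃ {g : Fin (m + 2) → V // ∀ i, Γ.Adj (g i) (g (i + 1))} where
  toFun φ := ⟨φ, fun i => φ.map_adj (by
    rw [SimpleGraph.cycleGraph_adj]
    exact Or.inr (add_sub_cancel_left i 1))⟩
  invFun p := ⟨p.1, by
    intro a b hab
    rw [SimpleGraph.cycleGraph_adj] at hab
    rcases hab with h | h
    · have ha : a = b + 1 := sub_eq_iff_eq_add'.mp h
      rw [ha]
      exact (p.2 b).symm
    · have hb : b = a + 1 := sub_eq_iff_eq_add'.mp h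
      rw [hb]
      exact p.2 a⟩
  left_inv φ := rfl
  right_inv p := rfl

lemma aux_homCount_cycle (Γ : SimpleGraph V) [DecidableRel Γ.Adj] (m : ℕ) :
    (homCount (cycleGraph (m + 2)) Γ : ℝ) = ((Γ.adjMatrix ℝ) ^ (m + 2)).trace := by
  rw [show m + 2 = (m + 1) + 1 from rfl, aux_trace_pow_cyclic]
  have hb : ∀ g : Fin (m + 2) → V, (∏ i, Γ.adjMatrix ℝ (g i) (g (i+1)))
      = if ∀ i, Γ.Adj (g i) (g (i + 1)) then (1 : ℝ) else 0 := by
    intro g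
    simp only [SimpleGraph.adjMatrix_apply]
    rw [Finset.prod_boole]
    simp
  simp only [hb]
  rw [Finset.sum_boole, homCount, Nat.card_congr (cycHomEquiv Γ m),
    Nat.card_eq_fintype_card, Fintype.card_subtype]

end Aux

/-- Inequality (2.2): the homomorphism count of odd cycles in an `(n,d,λ)`-graph. -/
theorem oddcycle_hom_estimate (V : Type) [Fintype V] [DecidableEq V]
    (Γ : SimpleGraph V) [DecidableRel Γ.Adj] (n d : ℕ) (lam : ℝ)
    (hn : Fintype.card V = n) (hΓ : IsNDLGraph Γ d lam) (k : ℕ) (hk : 1 ≤ k) :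
    |(homCount (cycleGraph (2 * k + 1)) Γ : ℝ) - (d : ℝ) ^ (2 * k + 1)| ≤
      lam * (homCount (cycleGraph (2 * k)) Γ : ℝ) := by
  obtain ⟨hreg, hA, i₀, hi₀, hbound⟩ := hΓ
  obtain ⟨j, rfl⟩ : ∃ j, k = j + 1 := ⟨k - 1, by omega⟩
  have h1 : (homCount (cycleGraph (2 * (j + 1) + 1)) Γ : ℝ)
      = ∑ i : V, (hA.eigenvalues i) ^ (2 * (j + 1) + 1) := by
    rw [show 2 * (j + 1) + 1 = (2 * j + 1) + 2 by ring, aux_homCount_cycle,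
      aux_trace_pow_eq_sum_eigenvalues _ hA]
  have h2 : (homCount (cycleGraph (2 * (j + 1))) Γ : ℝ)
      = ∑ i : V, (hA.eigenvalues i) ^ (2 * (j + 1)) := by
    rw [show 2 * (j + 1) = 2 * j + 2 by ring, aux_homCount_cycle,
      aux_trace_pow_eq_sum_eigenvalues _ hA]
  set m := 2 * (j + 1) with hm
  set S : Finset V := Finset.univ.erase i₀ with hS
  have hsplit : ∀ p : ℕ, ∑ i : V, (hA.eigenvalues i) ^ p
      = (d : ℝ) ^ p + ∑ i ∈ S, (hA.eigenvalues i) ^ p := by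
    intro p
    rw [← hi₀, hS]
    exact (Finset.add_sum_erase _ _ (Finset.mem_univ i₀)).symm
  have key : |(homCount (cycleGraph (m + 1)) Γ : ℝ) - (d : ℝ) ^ (m + 1)|
      ≤ lam * ∑ i ∈ S, (hA.eigenvalues i) ^ m := by
    rw [h1, hsplit, add_sub_cancel_left]
    calc |∑ i ∈ S, (hA.eigenvalues i) ^ (m + 1)|
        ≤ ∑ i ∈ S, |(hA.eigenvalues i) ^ (m + 1)| := Finset.abs_sum_le_sum_abs _ _
      _ ≤ ∑ i ∈ S, lam * (hA.eigenvalues i) ^ m := by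
          refine Finset.sum_le_sum fun i hiS => ?_
          have hi : i ≠ i₀ := Finset.ne_of_mem_erase hiS
          have heven : (hA.eigenvalues i) ^ m = |hA.eigenvalues i| ^ m := by
            rw [pow_abs, abs_of_nonneg]
            exact Even.pow_nonneg ⟨j + 1, by omega⟩ _
          rw [abs_pow, pow_succ, heven, mul_comm]
          exact mul_le_mul_of_nonneg_right (hbound i hi) (pow_nonneg (abs_nonneg _) _)
      _ = lam * ∑ i ∈ S, (hA.eigenvalues i) ^ m := (Finset.mul_sum _ _ _).symm
  rw [show 2 * (j + 1) + 1 = m + 1 from rfl]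
  refine key.trans ?_
  rw [h2, hsplit]
  rcases S.eq_empty_or_nonempty with hSe | ⟨i₁, hi₁⟩
  · have hd : d = 0 := by
      have hcard : Fintype.card V ≤ 1 := by
        by_contra hc
        push_neg at hc
        obtain ⟨i, hi⟩ := Fintype.exists_ne_of_one_lt_card hc i₀
        exact Finset.notMem_empty i (hSe ▸ Finset.mem_erase.mpr ⟨hi, Finset.mem_univ i⟩)
      have := hreg i₀
      have hdeg : Γ.degree i₀ = 0 := by
        rw [← Nat.lt_one_iff]
        calc Γ.degree i₀ < Fintype.card V := Γ.degree_lt_card_verts i₀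
          _ ≤ 1 := hcard
      omega
    rw [hSe, hd]
    simp [hm]
  · have hlam : 0 ≤ lam := le_trans (abs_nonneg _) (hbound i₁ (Finset.ne_of_mem_erase hi₁))
    have hdm : (0 : ℝ) ≤ (d : ℝ) ^ m := pow_nonneg (Nat.cast_nonneg d) m
    nlinarith [Finset.sum_nonneg (fun i (_ : i ∈ S) =>
      Even.pow_nonneg (⟨j + 1, by omega⟩ : Even m) (hA.eigenvalues i))]
end

section
/- Let Γ be an (n,d,λ)-graph, let q ≥ 1 and r ≥ 1 be integers, and let H be the graph consisting of an edge-disjoint cycle C_{2q} and cycle C_{2r+1} sharing exactly one vertex. Then h_H(Γ) ≤ d^{2(q+r)+1}/n + λ^{2q−2}·d^{2r+2} + λ·d^{2(q+r)} + λ^{2(q+r)−1}·d·n. -/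
open Finset SimpleGraph

/-- Relabelling of the vertices of the second cycle: the cycle `C_{2r+1}` uses the vertices
`0, 2q, 2q+1, …, 2q+2r-1` (sharing only the vertex `0` with the first cycle `C_{2q}`). -/
def embC (q i : ℕ) : ℕ := if i = 0 then 0 else 2 * q + i - 1

/-- The graph consisting of an edge-disjoint cycle `C_{2q}` (on the vertices `0,…,2q-1`) and an
odd cycle `C_{2r+1}` (on the vertices `0, 2q, …, 2q+2r-1`) sharing exactly the vertex `0`. -/
def gluedCycles (q r : ℕ) : SimpleGraph (Fin (2 * q + 2 * r)) :=
  SimpleGraph.fromRel (fun a b =>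
    (∃ i : ℕ, i < 2 * q ∧ a.val = i ∧ b.val = (i + 1) % (2 * q)) ∨
    (∃ i : ℕ, i < 2 * r + 1 ∧ a.val = embC q i ∧ b.val = embC q ((i + 1) % (2 * r + 1))))

/-! ### Auxiliary material -/

set_option linter.unusedSectionVars false

section SpectralAux
variable {V : Type} [Fintype V] [DecidableEq V] (Γ : SimpleGraph V) [DecidableRel Γ.Adj]

theorem aux_orthog (hA : (Γ.adjMatrix ℝ).IsHermitian) (i j : V) :
    ∑ v, hA.eigenvectorBasis i v * hA.eigenvectorBasis j v = if i = j then 1 else 0 := by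
  have h := hA.eigenvectorBasis.orthonormal
  rw [orthonormal_iff_ite] at h
  have h2 := h i j
  rw [← h2]
  simp [PiLp.inner_apply, RCLike.inner_apply]
  exact Finset.sum_congr rfl (fun _ _ => mul_comm _ _)

theorem aux_completeness (hA : (Γ.adjMatrix ℝ).IsHermitian) (v w : V) :
    ∑ i, hA.eigenvectorBasis i v * hA.eigenvectorBasis i w = if v = w then 1 else 0 := by
  have h := hA.eigenvectorBasis.sum_inner_mul_inner (EuclideanSpace.single v (1:ℝ))
    (EuclideanSpace.single w (1:ℝ))
  simp only [EuclideanSpace.inner_single_left, EuclideanSpace.inner_single_right,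
    starRingEnd_apply, star_one, one_mul, mul_one, star_trivial] at h
  rw [h]
  simp [EuclideanSpace.single_apply, eq_comm]

theorem aux_mulVec_entry (hA : (Γ.adjMatrix ℝ).IsHermitian) (i : V) (v : V) :
    ∑ w, Γ.adjMatrix ℝ v w * hA.eigenvectorBasis i w
      = hA.eigenvalues i * hA.eigenvectorBasis i v := by
  have h := congrFun (hA.mulVec_eigenvectorBasis i) v
  simpa [Matrix.mulVec, dotProduct] using h

theorem aux_key (hA : (Γ.adjMatrix ℝ).IsHermitian) (m : ℕ) (v w : V) :
    ((Γ.adjMatrix ℝ) ^ m) v w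
      = ∑ i, hA.eigenvalues i ^ m * (hA.eigenvectorBasis i v * hA.eigenvectorBasis i w) := by
  induction m generalizing v w with
  | zero =>
    simp only [pow_zero, Matrix.one_apply, one_mul]
    rw [← aux_completeness Γ hA v w]
  | succ m ih =>
    rw [pow_succ', Matrix.mul_apply]
    calc ∑ x, Γ.adjMatrix ℝ v x * ((Γ.adjMatrix ℝ) ^ m) x w
        = ∑ x, ∑ i, hA.eigenvalues i ^ m
            * ((Γ.adjMatrix ℝ v x * hA.eigenvectorBasis i x) * hA.eigenvectorBasis i w) := by
          congr 1; funext x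
          rw [ih, Finset.mul_sum]
          congr 1; funext i
          ring
      _ = ∑ i, hA.eigenvalues i ^ m *
            ((∑ x, Γ.adjMatrix ℝ v x * hA.eigenvectorBasis i x) * hA.eigenvectorBasis i w) := by
          rw [Finset.sum_comm]
          congr 1; funext i
          rw [← Finset.mul_sum, Finset.sum_mul]
      _ = ∑ i, hA.eigenvalues i ^ (m+1)
            * (hA.eigenvectorBasis i v * hA.eigenvectorBasis i w) := by
          congr 1; funext i
          rw [aux_mulVec_entry Γ hA i v]
          ring

theorem aux_diag_sq_bound (hA : (Γ.adjMatrix ℝ).IsHermitian) (I : Finset V) (a : V → ℝ) :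
    ∑ v, (∑ i ∈ I, a i * (hA.eigenvectorBasis i v * hA.eigenvectorBasis i v)) ^ 2
      ≤ ∑ i ∈ I, a i ^ 2 := by
  have step1 : ∑ v, (∑ i ∈ I, a i * (hA.eigenvectorBasis i v * hA.eigenvectorBasis i v)) ^ 2
      ≤ ∑ v, ∑ w, (∑ i ∈ I, a i * (hA.eigenvectorBasis i v * hA.eigenvectorBasis i w)) ^ 2 := by
    apply Finset.sum_le_sum
    intro v _
    exact Finset.single_le_sum
      (f := fun w => (∑ i ∈ I, a i * (hA.eigenvectorBasis i v * hA.eigenvectorBasis i w)) ^ 2)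
      (fun w _ => sq_nonneg _) (Finset.mem_univ v)
  refine le_trans step1 (le_of_eq ?_)
  calc ∑ v, ∑ w, (∑ i ∈ I, a i * (hA.eigenvectorBasis i v * hA.eigenvectorBasis i w)) ^ 2
      = ∑ v : V, ∑ w : V, ∑ i ∈ I, ∑ j ∈ I, (a i * a j) *
          ((hA.eigenvectorBasis i v * hA.eigenvectorBasis j v)
            * (hA.eigenvectorBasis i w * hA.eigenvectorBasis j w)) := by
        apply Finset.sum_congr rfl; intro v _
        apply Finset.sum_congr rfl; intro w _
        rw [sq, Finset.sum_mul_sum]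
        apply Finset.sum_congr rfl; intro i _
        apply Finset.sum_congr rfl; intro j _
        ring
    _ = ∑ v : V, ∑ i ∈ I, ∑ j ∈ I, ∑ w : V, (a i * a j) *
          ((hA.eigenvectorBasis i v * hA.eigenvectorBasis j v)
            * (hA.eigenvectorBasis i w * hA.eigenvectorBasis j w)) := by
        apply Finset.sum_congr rfl; intro v _
        rw [Finset.sum_comm]
        apply Finset.sum_congr rfl; intro i _
        rw [Finset.sum_comm]
    _ = ∑ i ∈ I, ∑ j ∈ I, ∑ v : V, ∑ w : V, (a i * a j) *
          ((hA.eigenvectorBasis i v * hA.eigenvectorBasis j v)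
            * (hA.eigenvectorBasis i w * hA.eigenvectorBasis j w)) := by
        rw [Finset.sum_comm]
        apply Finset.sum_congr rfl; intro i _
        rw [Finset.sum_comm]
    _ = ∑ i ∈ I, ∑ j ∈ I, (a i * a j) *
          ((∑ v, hA.eigenvectorBasis i v * hA.eigenvectorBasis j v)
            * (∑ w, hA.eigenvectorBasis i w * hA.eigenvectorBasis j w)) := by
        apply Finset.sum_congr rfl; intro i _
        apply Finset.sum_congr rfl; intro j _
        simp only [Finset.sum_mul_sum, Finset.mul_sum]
        apply Finset.sum_congr rfl; intro v _
        have hx : ∀ x : V, a i * a j *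
            (hA.eigenvectorBasis i v * hA.eigenvectorBasis j v
              * (hA.eigenvectorBasis i x * hA.eigenvectorBasis j x))
            = (a i * a j * (hA.eigenvectorBasis i v * hA.eigenvectorBasis j v))
              * (hA.eigenvectorBasis i x * hA.eigenvectorBasis j x) := fun x => by ring
        rw [Finset.sum_congr rfl (fun x _ => hx x), ← Finset.mul_sum]
        ring
    _ = ∑ i ∈ I, a i ^ 2 := by
        apply Finset.sum_congr rfl; intro i hi
        rw [Finset.sum_eq_single i]
        · rw [aux_orthog Γ hA i i]
          simp [sq]
        · intro j hj hne
          rw [aux_orthog Γ hA i j]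
          simp [Ne.symm hne]
        · intro h; exact absurd hi h

theorem aux_col_sum {d : ℕ} (hd : Γ.IsRegularOfDegree d) (w : V) :
    ∑ v, Γ.adjMatrix ℝ v w = d := by
  have h1 : ∑ v, Γ.adjMatrix ℝ v w = ∑ v, Γ.adjMatrix ℝ w v := by
    apply Finset.sum_congr rfl; intro v _
    simp [SimpleGraph.adjMatrix_apply, SimpleGraph.adj_comm]
  rw [h1]
  have h2 := Γ.adjMatrix_mulVec_const_apply (α := ℝ) (a := (1:ℝ)) (v := w)
  simp only [Matrix.mulVec, dotProduct, Function.const_apply, mul_one] at h2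
  rw [h2, hd w]

theorem aux_trace_pow (hA : (Γ.adjMatrix ℝ).IsHermitian) (m : ℕ) :
    ∑ v, ((Γ.adjMatrix ℝ) ^ m) v v = ∑ i, hA.eigenvalues i ^ m := by
  calc ∑ v, ((Γ.adjMatrix ℝ) ^ m) v v
      = ∑ v, ∑ i, hA.eigenvalues i ^ m
          * (hA.eigenvectorBasis i v * hA.eigenvectorBasis i v) := by
        apply Finset.sum_congr rfl; intro v _; exact aux_key Γ hA m v v
    _ = ∑ i, hA.eigenvalues i ^ m
          * ∑ v, hA.eigenvectorBasis i v * hA.eigenvectorBasis i v := by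
        rw [Finset.sum_comm]
        apply Finset.sum_congr rfl; intro i _
        rw [Finset.mul_sum]
    _ = ∑ i, hA.eigenvalues i ^ m := by
        apply Finset.sum_congr rfl; intro i _
        rw [aux_orthog Γ hA i i]
        simp

theorem aux_sumsq {d : ℕ} (hd : Γ.IsRegularOfDegree d) (hA : (Γ.adjMatrix ℝ).IsHermitian) :
    ∑ i, hA.eigenvalues i ^ 2 = (Fintype.card V : ℝ) * d := by
  rw [← aux_trace_pow Γ hA 2]
  have h : ∀ v : V, ((Γ.adjMatrix ℝ) ^ 2) v v = (d : ℝ) := by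
    intro v
    rw [pow_two, Γ.adjMatrix_mul_self_apply_self v]
    rw [hd v]
  rw [Finset.sum_congr rfl (fun v _ => h v)]
  simp [Finset.sum_const, mul_comm]

theorem aux_flat {d : ℕ} (hd : Γ.IsRegularOfDegree d) (hA : (Γ.adjMatrix ℝ).IsHermitian) (i₀ : V)
    (hother : ∀ i, i ≠ i₀ → hA.eigenvalues i ≠ (d : ℝ)) (v : V) :
    hA.eigenvectorBasis i₀ v * hA.eigenvectorBasis i₀ v = 1 / (Fintype.card V : ℝ) := by
  set u : V → V → ℝ := fun i w => hA.eigenvectorBasis i w with hu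
  set s : V → ℝ := fun i => ∑ w, u i w with hs
  have h1 : ∀ i, hA.eigenvalues i * s i = d * s i := by
    intro i
    have e1 : ∑ x, ∑ w, Γ.adjMatrix ℝ x w * u i w = hA.eigenvalues i * s i := by
      calc ∑ x, ∑ w, Γ.adjMatrix ℝ x w * u i w
          = ∑ x, hA.eigenvalues i * u i x := by
            apply Finset.sum_congr rfl; intro x _; exact aux_mulVec_entry Γ hA i x
        _ = hA.eigenvalues i * s i := by rw [hs, Finset.mul_sum]
    have e2 : ∑ x, ∑ w, Γ.adjMatrix ℝ x w * u i w = d * s i := by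
      rw [Finset.sum_comm]
      calc ∑ w, ∑ x, Γ.adjMatrix ℝ x w * u i w
          = ∑ w, (d : ℝ) * u i w := by
            apply Finset.sum_congr rfl; intro w _
            rw [← Finset.sum_mul, aux_col_sum Γ hd w]
        _ = d * s i := by rw [hs, Finset.mul_sum]
    rw [← e1, e2]
  have h2 : ∀ i, i ≠ i₀ → s i = 0 := by
    intro i hi
    by_contra hsi
    exact hother i hi (mul_right_cancel₀ hsi (h1 i))
  have h3 : ∀ x : V, u i₀ x * s i₀ = 1 := by
    intro x
    have c1 : ∑ w, ∑ i, u i x * u i w = 1 := by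
      calc ∑ w, ∑ i, u i x * u i w = ∑ w, if x = w then (1:ℝ) else 0 := by
            apply Finset.sum_congr rfl; intro w _; exact aux_completeness Γ hA x w
        _ = 1 := by simp
    rw [Finset.sum_comm] at c1
    calc u i₀ x * s i₀ = ∑ i, u i x * s i := by
          rw [Finset.sum_eq_single i₀]
          · intro j _ hj
            rw [h2 j hj, mul_zero]
          · intro h; exact absurd (Finset.mem_univ i₀) h
      _ = 1 := by
          rw [← c1]
          apply Finset.sum_congr rfl; intro i _
          rw [hs, Finset.mul_sum]
  have hsne : s i₀ ≠ 0 := fun h => by simpa [h] using h3 v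
  have h4 : ∀ x : V, u i₀ x = u i₀ v := by
    intro x
    exact mul_right_cancel₀ hsne ((h3 x).trans (h3 v).symm)
  have h5 : (Fintype.card V : ℝ) * (u i₀ v * u i₀ v) = 1 := by
    have o := aux_orthog Γ hA i₀ i₀
    simp only [if_pos rfl] at o
    calc (Fintype.card V : ℝ) * (u i₀ v * u i₀ v)
        = ∑ _w : V, u i₀ v * u i₀ v := by rw [Finset.sum_const, nsmul_eq_mul, Fintype.card]
      _ = ∑ w : V, u i₀ w * u i₀ w := by
          apply Finset.sum_congr rfl; intro w _; rw [h4 w]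
      _ = 1 := o
  have hcard : (Fintype.card V : ℝ) ≠ 0 := by
    have : Nonempty V := ⟨v⟩
    simp [Fintype.card_ne_zero]
  field_simp
  linarith [h5]

/-- bound for sums of powers of eigenvalues over a set where all of them are at most `lam`. -/
theorem aux_abs_pow_sum_bound (hA : (Γ.adjMatrix ℝ).IsHermitian) (I : Finset V) (lam : ℝ)
    (hlam0 : 0 ≤ lam) (habs : ∀ i ∈ I, |hA.eigenvalues i| ≤ lam) (e : ℕ) (he : 2 ≤ e) :
    ∑ i ∈ I, |hA.eigenvalues i| ^ e ≤ lam ^ (e-2) * ∑ i ∈ I, hA.eigenvalues i ^ 2 := by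
  calc ∑ i ∈ I, |hA.eigenvalues i| ^ e
      = ∑ i ∈ I, |hA.eigenvalues i| ^ (e-2) * hA.eigenvalues i ^ 2 := by
        apply Finset.sum_congr rfl; intro i _
        rw [← sq_abs, ← pow_add]
        congr 1; omega
    _ ≤ ∑ i ∈ I, lam ^ (e-2) * hA.eigenvalues i ^ 2 := by
        apply Finset.sum_le_sum; intro i hi
        exact mul_le_mul_of_nonneg_right
          (pow_le_pow_left₀ (abs_nonneg _) (habs i hi) _) (sq_nonneg _)
    _ = lam ^ (e-2) * ∑ i ∈ I, hA.eigenvalues i ^ 2 := by rw [Finset.mul_sum]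

end SpectralAux

section WalkAux
variable {V : Type} [Fintype V] [DecidableEq V] (Γ : SimpleGraph V) [DecidableRel Γ.Adj]

def chainWalk (f : ℕ → V) : (j m : ℕ) → (∀ i, j ≤ i → i < j + m → Γ.Adj (f i) (f (i+1))) →
    Γ.Walk (f j) (f (j + m))
  | j, 0, _ => Walk.nil.copy rfl (congrArg f (by omega))
  | j, m+1, h =>
    (Walk.cons (h j le_rfl (by omega))
      ((chainWalk f (j+1) m (fun i h1 h2 => h i (by omega) (by omega))).copy rfl
        (congrArg f (by omega))))

theorem chainWalk_length (f : ℕ → V) (j m : ℕ) (h) :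
    (chainWalk Γ f j m h).length = m := by
  induction m generalizing j with
  | zero => simp [chainWalk]
  | succ m ih => simp [chainWalk, ih]

theorem chainWalk_getVert (f : ℕ → V) (j m : ℕ) (h) (k : ℕ) (hk : k ≤ m) :
    (chainWalk Γ f j m h).getVert k = f (j + k) := by
  induction m generalizing j k with
  | zero =>
    have : k = 0 := by omega
    subst this
    simp [chainWalk]
  | succ m ih =>
    match k with
    | 0 => simp [chainWalk]
    | k+1 =>
      simp only [chainWalk, Walk.getVert_cons_succ, Walk.getVert_copy]
      rw [ih (j+1) (fun i h1 h2 => h i (by omega) (by omega)) k (by omega)]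
      congr 1; omega

end WalkAux

/-- first cycle vertex labels -/
def cyc1 (q r : ℕ) (hq : 1 ≤ q) (i : ℕ) : Fin (2*q+2*r) :=
  ⟨i % (2*q), by have := Nat.mod_lt i (show 0 < 2*q by omega); omega⟩

/-- second cycle vertex labels -/
def cyc2 (q r : ℕ) (hq : 1 ≤ q) (hr : 1 ≤ r) (i : ℕ) : Fin (2*q+2*r) :=
  ⟨embC q (i % (2*r+1)), by
    have := Nat.mod_lt i (show 0 < 2*r+1 by omega)
    simp only [embC]; split <;> omega⟩

section CountAux
variable {V : Type} [Fintype V] [DecidableEq V] (Γ : SimpleGraph V) [DecidableRel Γ.Adj]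
variable (q r : ℕ) (hq : 1 ≤ q) (hr : 1 ≤ r)

def cyclesPred (f : Fin (2*q+2*r) → V) : Prop :=
  (∀ i ∈ Finset.range (2*q), Γ.Adj (f (cyc1 q r hq i)) (f (cyc1 q r hq (i+1)))) ∧
  (∀ i ∈ Finset.range (2*r+1), Γ.Adj (f (cyc2 q r hq hr i)) (f (cyc2 q r hq hr (i+1))))

def glueWalk1 (f : Fin (2*q+2*r) → V)
    (hadj : ∀ i < 2*q, Γ.Adj (f (cyc1 q r hq i)) (f (cyc1 q r hq (i+1))))
    (v : V) (hv : f (cyc1 q r hq 0) = v) : Γ.Walk v v :=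
  (chainWalk Γ (fun i => f (cyc1 q r hq i)) 0 (2*q) (fun i _ h2 => hadj i (by omega))).copy
    hv (by
      rw [show cyc1 q r hq (0+2*q) = cyc1 q r hq 0 from Fin.ext (by simp [cyc1])]
      exact hv)

theorem glueWalk1_length (f hadj v hv) :
    (glueWalk1 Γ q r hq f hadj v hv).length = 2*q := by
  simp [glueWalk1, chainWalk_length]

theorem glueWalk1_getVert (f hadj v hv) (k : ℕ) (hk : k ≤ 2*q) :
    (glueWalk1 Γ q r hq f hadj v hv).getVert k = f (cyc1 q r hq k) := by
  simp only [glueWalk1, Walk.getVert_copy]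
  rw [chainWalk_getVert Γ _ 0 (2*q) _ k hk]
  simp

def glueWalk2 (f : Fin (2*q+2*r) → V)
    (hadj : ∀ i < 2*r+1, Γ.Adj (f (cyc2 q r hq hr i)) (f (cyc2 q r hq hr (i+1))))
    (v : V) (hv : f (cyc2 q r hq hr 0) = v) : Γ.Walk v v :=
  (chainWalk Γ (fun i => f (cyc2 q r hq hr i)) 0 (2*r+1) (fun i _ h2 => hadj i (by omega))).copy
    hv (by
      rw [show cyc2 q r hq hr (0+(2*r+1)) = cyc2 q r hq hr 0 from Fin.ext (by simp [cyc2])]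
      exact hv)

theorem glueWalk2_length (f hadj v hv) :
    (glueWalk2 Γ q r hq hr f hadj v hv).length = 2*r+1 := by
  simp [glueWalk2, chainWalk_length]

theorem glueWalk2_getVert (f hadj v hv) (k : ℕ) (hk : k ≤ 2*r+1) :
    (glueWalk2 Γ q r hq hr f hadj v hv).getVert k = f (cyc2 q r hq hr k) := by
  simp only [glueWalk2, Walk.getVert_copy]
  rw [chainWalk_getVert Γ _ 0 (2*r+1) _ k hk]
  simp

end CountAux

theorem mod_succ_ne (m i : ℕ) (hm : 2 ≤ m) (hi : i < m) : (i+1) % m ≠ i := by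
  rcases Nat.lt_or_ge (i+1) m with h | h
  · rw [Nat.mod_eq_of_lt h]; omega
  · have h2 : i + 1 = m := by omega
    rw [h2, Nat.mod_self]; omega

theorem embC_inj (q : ℕ) (hq : 1 ≤ q) (a b : ℕ) (h : embC q a = embC q b) : a = b := by
  simp only [embC] at h; split at h <;> split at h <;> omega

section MainCount
variable {V : Type} [Fintype V] [DecidableEq V] (Γ : SimpleGraph V) [DecidableRel Γ.Adj]

theorem homCount_le_walkcount (q r : ℕ) (hq : 1 ≤ q) (hr : 1 ≤ r) :
    homCount (gluedCycles q r) Γ ≤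
      ∑ v : V, Fintype.card {p : Γ.Walk v v | p.length = 2*q}
            * Fintype.card {p : Γ.Walk v v | p.length = 2*r+1} := by
  classical
  set F : Finset (Fin (2*q+2*r) → V) := Finset.univ.filter (cyclesPred Γ q r hq hr) with hF
  have hmem : ∀ h : gluedCycles q r →g Γ, ⇑h ∈ F := by
    intro h
    rw [hF, Finset.mem_filter]
    refine ⟨Finset.mem_univ _, ?_, ?_⟩
    · intro i hi
      rw [Finset.mem_range] at hi
      apply h.map_adj
      unfold gluedCycles
      rw [SimpleGraph.fromRel_adj]
      constructor
      · intro heq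
        have hv := congrArg Fin.val heq
        simp only [cyc1] at hv
        rw [Nat.mod_eq_of_lt hi] at hv
        exact mod_succ_ne (2*q) i (by omega) hi hv.symm
      · refine Or.inl (Or.inl ⟨i, hi, ?_, ?_⟩)
        · simp [cyc1, Nat.mod_eq_of_lt hi]
        · rfl
    · intro i hi
      rw [Finset.mem_range] at hi
      apply h.map_adj
      unfold gluedCycles
      rw [SimpleGraph.fromRel_adj]
      constructor
      · intro heq
        have hv := congrArg Fin.val heq
        simp only [cyc2] at hv
        have h3 := embC_inj q hq _ _ hv
        rw [Nat.mod_eq_of_lt hi] at h3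
        exact mod_succ_ne (2*r+1) i (by omega) hi h3.symm
      · refine Or.inl (Or.inr ⟨i, hi, ?_, ?_⟩)
        · simp [cyc2, Nat.mod_eq_of_lt hi]
        · rfl
  have stepA : homCount (gluedCycles q r) Γ ≤ F.card := by
    calc homCount (gluedCycles q r) Γ
        ≤ Nat.card {f : Fin (2*q+2*r) → V // f ∈ F} := by
          apply Nat.card_le_card_of_injective (fun h => ⟨⇑h, hmem h⟩)
          intro a b hab
          exact DFunLike.coe_injective (congrArg Subtype.val hab)
      _ = F.card := by rw [Nat.card_eq_fintype_card, Fintype.card_coe]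
  refine le_trans stepA ?_
  rw [Finset.card_eq_sum_card_fiberwise
    (f := fun f : Fin (2*q+2*r) → V => f (cyc1 q r hq 0)) (t := Finset.univ)
    (fun f _ => Finset.mem_univ _)]
  apply Finset.sum_le_sum
  intro v _
  set Fv := F.filter (fun f => f (cyc1 q r hq 0) = v) with hFv
  have hadj1 : ∀ f : Fin (2*q+2*r) → V, f ∈ Fv →
      ∀ i < 2*q, Γ.Adj (f (cyc1 q r hq i)) (f (cyc1 q r hq (i+1))) := by
    intro f hf i hi
    exact ((Finset.mem_filter.mp ((Finset.mem_filter.mp hf).1)).2).1 i (Finset.mem_range.mpr hi)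
  have hadj2 : ∀ f : Fin (2*q+2*r) → V, f ∈ Fv →
      ∀ i < 2*r+1, Γ.Adj (f (cyc2 q r hq hr i)) (f (cyc2 q r hq hr (i+1))) := by
    intro f hf i hi
    exact ((Finset.mem_filter.mp ((Finset.mem_filter.mp hf).1)).2).2 i (Finset.mem_range.mpr hi)
  have hv0 : ∀ f : Fin (2*q+2*r) → V, f ∈ Fv → f (cyc1 q r hq 0) = v := by
    intro f hf
    exact (Finset.mem_filter.mp hf).2
  have hv0' : ∀ f : Fin (2*q+2*r) → V, f ∈ Fv → f (cyc2 q r hq hr 0) = v := by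
    intro f hf
    rw [show cyc2 q r hq hr 0 = cyc1 q r hq 0 from Fin.ext (by simp [cyc1, cyc2, embC])]
    exact hv0 f hf
  calc Fv.card = Fintype.card {f // f ∈ Fv} := (Fintype.card_coe _).symm
    _ ≤ Fintype.card ({p : Γ.Walk v v | p.length = 2*q} × {p : Γ.Walk v v | p.length = 2*r+1}) := by
        apply Fintype.card_le_of_injective (fun fp =>
          (⟨glueWalk1 Γ q r hq fp.1 (hadj1 fp.1 fp.2) v (hv0 fp.1 fp.2),
            glueWalk1_length Γ q r hq _ _ _ _⟩,
           ⟨glueWalk2 Γ q r hq hr fp.1 (hadj2 fp.1 fp.2) v (hv0' fp.1 fp.2),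
            glueWalk2_length Γ q r hq hr _ _ _ _⟩))
        intro a b hab
        rw [Prod.mk.injEq, Subtype.mk.injEq, Subtype.mk.injEq] at hab
        obtain ⟨h1, h2⟩ := hab
        apply Subtype.ext
        funext t
        rcases Nat.lt_or_ge t.val (2*q) with ht | ht
        · have e1 := congrArg (fun w => SimpleGraph.Walk.getVert w t.val) h1
          rw [glueWalk1_getVert Γ q r hq _ _ _ _ t.val (by omega),
            glueWalk1_getVert Γ q r hq _ _ _ _ t.val (by omega)] at e1
          rw [show cyc1 q r hq t.val = t from Fin.ext (by simp [cyc1, Nat.mod_eq_of_lt ht])] at e1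
          exact e1
        · have htlt := t.isLt
          set k := t.val - 2*q + 1 with hk
          have hk1 : 1 ≤ k := by omega
          have hk2 : k ≤ 2*r := by omega
          have e2 := congrArg (fun w => SimpleGraph.Walk.getVert w k) h2
          rw [glueWalk2_getVert Γ q r hq hr _ _ _ _ k (by omega),
            glueWalk2_getVert Γ q r hq hr _ _ _ _ k (by omega)] at e2
          rw [show cyc2 q r hq hr k = t from Fin.ext (by
            simp only [cyc2, embC, Nat.mod_eq_of_lt (show k < 2*r+1 by omega)]
            split <;> omega)] at e2
          exact e2
    _ = Fintype.card {p : Γ.Walk v v | p.length = 2*q}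
          * Fintype.card {p : Γ.Walk v v | p.length = 2*r+1} := Fintype.card_prod _ _

end MainCount

set_option maxHeartbeats 1000000 in
/-- Lemma 2.3 (counting degenerate odd cycles): homomorphism count of `C_{2q}` and `C_{2r+1}`
glued at a vertex. -/
theorem glued_cycles_hom_upper_bound (V : Type) [Fintype V] [DecidableEq V]
    (Γ : SimpleGraph V) [DecidableRel Γ.Adj] (n d : ℕ) (lam : ℝ)
    (hn : Fintype.card V = n) (hΓ : IsNDLGraph Γ d lam) (q r : ℕ) (hq : 1 ≤ q) (hr : 1 ≤ r) :
    (homCount (gluedCycles q r) Γ : ℝ) ≤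
      (d : ℝ) ^ (2 * (q + r) + 1) / n + lam ^ (2 * q - 2) * (d : ℝ) ^ (2 * r + 2) +
        lam * (d : ℝ) ^ (2 * (q + r)) + lam ^ (2 * (q + r) - 1) * d * n := by
  classical
  obtain ⟨hd, hA, i₀, h0, hlam⟩ := hΓ
  subst hn
  -- cast the combinatorial bound
  have hcast : (homCount (gluedCycles q r) Γ : ℝ)
      ≤ ∑ v, (((Γ.adjMatrix ℝ) ^ (2*q)) v v * ((Γ.adjMatrix ℝ) ^ (2*r+1)) v v) := by
    calc (homCount (gluedCycles q r) Γ : ℝ)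
        ≤ ((∑ v : V, Fintype.card {p : Γ.Walk v v | p.length = 2*q}
            * Fintype.card {p : Γ.Walk v v | p.length = 2*r+1} : ℕ) : ℝ) :=
          Nat.cast_le.mpr (homCount_le_walkcount Γ q r hq hr)
      _ = _ := by
          push_cast
          apply Finset.sum_congr rfl; intro v _
          rw [Γ.adjMatrix_pow_apply_eq_card_walk, Γ.adjMatrix_pow_apply_eq_card_walk]
  rcases Nat.eq_zero_or_pos d with hd0 | hd1
  · -- degenerate case d = 0 : no homomorphisms, RHS is zero
    subst hd0
    have hedge : (gluedCycles q r).Adj ⟨0, by omega⟩ ⟨1, by omega⟩ := by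
      unfold gluedCycles
      rw [SimpleGraph.fromRel_adj]
      constructor
      · intro heq
        have := congrArg Fin.val heq
        simp at this
      · refine Or.inl (Or.inl ⟨0, by omega, rfl, ?_⟩)
        simp [Nat.mod_eq_of_lt (show 1 < 2*q by omega)]
    have hhom : homCount (gluedCycles q r) Γ = 0 := by
      unfold homCount
      rw [Nat.card_eq_zero]
      left
      constructor
      intro h
      have hadj := h.map_adj hedge
      have hy : h ⟨1, by omega⟩ ∈ Γ.neighborFinset (h ⟨0, by omega⟩) := by
        rw [SimpleGraph.mem_neighborFinset]; exact hadj
      have hc := hd (h ⟨0, by omega⟩)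
      rw [Finset.card_eq_zero.mp hc] at hy
      exact absurd hy (Finset.notMem_empty _)
    rw [hhom]
    push_cast
    rw [zero_pow (by omega : 2*(q+r)+1 ≠ 0), zero_pow (by omega : 2*r+2 ≠ 0),
      zero_pow (by omega : 2*(q+r) ≠ 0)]
    simp
  · -- main case d ≥ 1
    have hn0 : 0 < Fintype.card V := Fintype.card_pos_iff.mpr ⟨i₀⟩
    have hn2 : 2 ≤ Fintype.card V := by
      have hdegpos : 0 < Γ.degree i₀ := by rw [hd i₀]; omega
      obtain ⟨w, hw⟩ := Finset.card_pos.mp hdegpos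
      have hne : w ≠ i₀ := by
        rw [SimpleGraph.mem_neighborFinset] at hw
        exact (Γ.ne_of_adj hw).symm
      exact Fintype.one_lt_card_iff.mpr ⟨w, i₀, hne⟩
    obtain ⟨j₁, hj₁⟩ := Fintype.exists_ne_of_one_lt_card hn2 i₀
    have hlam0 : 0 ≤ lam := le_trans (abs_nonneg _) (hlam j₁ hj₁)
    have hdR : (0:ℝ) ≤ d := Nat.cast_nonneg d
    have hd1R : (1:ℝ) ≤ d := by exact_mod_cast hd1
    have hcR : (0:ℝ) < Fintype.card V := by exact_mod_cast hn0
    have hsumsq := aux_sumsq Γ hd hA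
    rcases le_or_gt (d:ℝ) lam with hcase | hcase
    · -- case lam ≥ d : crude Cauchy–Schwarz bound on the whole sum
      have habs : ∀ i : V, |hA.eigenvalues i| ≤ lam := by
        intro i
        by_cases hii : i = i₀
        · rw [hii, h0, abs_of_nonneg hdR]; exact hcase
        · exact hlam i hii
      have s1 : ∑ v, (((Γ.adjMatrix ℝ) ^ (2*q)) v v) ^ 2
          ≤ lam ^ (4*q-2) * ((Fintype.card V : ℝ) * d) := by
        calc ∑ v, (((Γ.adjMatrix ℝ) ^ (2*q)) v v) ^ 2
            = ∑ v, (∑ i, hA.eigenvalues i ^ (2*q)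
              * (hA.eigenvectorBasis i v * hA.eigenvectorBasis i v)) ^ 2 := by
              apply Finset.sum_congr rfl; intro v _
              rw [aux_key Γ hA (2*q) v v]
          _ ≤ ∑ i, (hA.eigenvalues i ^ (2*q)) ^ 2 :=
              aux_diag_sq_bound Γ hA Finset.univ _
          _ = ∑ i, |hA.eigenvalues i| ^ (4*q) := by
              apply Finset.sum_congr rfl; intro i _
              rw [← pow_mul, ← abs_pow, abs_of_nonneg (Even.pow_nonneg ⟨2*q, by ring⟩ _)]
              congr 1; omega
          _ ≤ lam ^ (4*q-2) * ∑ i, hA.eigenvalues i ^ 2 :=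
              aux_abs_pow_sum_bound Γ hA Finset.univ lam hlam0
                (fun i _ => habs i) (4*q) (by omega)
          _ = lam ^ (4*q-2) * ((Fintype.card V : ℝ) * d) := by rw [hsumsq]
      have s2 : ∑ v, (((Γ.adjMatrix ℝ) ^ (2*r+1)) v v) ^ 2
          ≤ lam ^ (4*r) * ((Fintype.card V : ℝ) * d) := by
        calc ∑ v, (((Γ.adjMatrix ℝ) ^ (2*r+1)) v v) ^ 2
            = ∑ v, (∑ i, hA.eigenvalues i ^ (2*r+1)
              * (hA.eigenvectorBasis i v * hA.eigenvectorBasis i v)) ^ 2 := by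
              apply Finset.sum_congr rfl; intro v _
              rw [aux_key Γ hA (2*r+1) v v]
          _ ≤ ∑ i, (hA.eigenvalues i ^ (2*r+1)) ^ 2 :=
              aux_diag_sq_bound Γ hA Finset.univ _
          _ = ∑ i, |hA.eigenvalues i| ^ (4*r+2) := by
              apply Finset.sum_congr rfl; intro i _
              rw [← pow_mul, ← abs_pow, abs_of_nonneg (Even.pow_nonneg ⟨2*r+1, by ring⟩ _)]
              congr 1; omega
          _ ≤ lam ^ (4*r) * ∑ i, hA.eigenvalues i ^ 2 := by
              have := aux_abs_pow_sum_bound Γ hA Finset.univ lam hlam0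
                (fun i _ => habs i) (4*r+2) (by omega)
              simpa using this
          _ = lam ^ (4*r) * ((Fintype.card V : ℝ) * d) := by rw [hsumsq]
      have cauchy := Finset.sum_mul_sq_le_sq_mul_sq Finset.univ
        (fun v => ((Γ.adjMatrix ℝ) ^ (2*q)) v v) (fun v => ((Γ.adjMatrix ℝ) ^ (2*r+1)) v v)
      have hKnonneg : (0:ℝ) ≤ lam ^ (2*(q+r)-1) * d * (Fintype.card V : ℝ) := by positivity
      have hprod : (lam ^ (4*q-2) * ((Fintype.card V : ℝ) * d))
          * (lam ^ (4*r) * ((Fintype.card V : ℝ) * d))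
          = (lam ^ (2*(q+r)-1) * d * (Fintype.card V : ℝ)) ^ 2 := by
        have hl : lam ^ (4*q-2) * lam ^ (4*r) = (lam ^ (2*(q+r)-1)) ^ 2 := by
          rw [← pow_add, ← pow_mul]
          congr 1; omega
        calc (lam ^ (4*q-2) * ((Fintype.card V : ℝ) * d))
              * (lam ^ (4*r) * ((Fintype.card V : ℝ) * d))
            = (lam ^ (4*q-2) * lam ^ (4*r)) * ((Fintype.card V : ℝ) * d) ^ 2 := by ring
          _ = (lam ^ (2*(q+r)-1)) ^ 2 * ((Fintype.card V : ℝ) * d) ^ 2 := by rw [hl]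
          _ = (lam ^ (2*(q+r)-1) * d * (Fintype.card V : ℝ)) ^ 2 := by ring
      have hmain : ∑ v, (((Γ.adjMatrix ℝ) ^ (2*q)) v v * ((Γ.adjMatrix ℝ) ^ (2*r+1)) v v)
          ≤ lam ^ (2*(q+r)-1) * d * (Fintype.card V : ℝ) := by
        have hsq1 : (0:ℝ) ≤ ∑ v, (((Γ.adjMatrix ℝ) ^ (2*q)) v v) ^ 2 :=
          Finset.sum_nonneg (fun v _ => sq_nonneg _)
        have hsq2 : (0:ℝ) ≤ ∑ v, (((Γ.adjMatrix ℝ) ^ (2*r+1)) v v) ^ 2 :=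
          Finset.sum_nonneg (fun v _ => sq_nonneg _)
        have hup := le_trans cauchy (le_of_le_of_eq
          (mul_le_mul s1 s2 hsq2 (by positivity : (0:ℝ) ≤ lam ^ (4*q-2) * ((Fintype.card V : ℝ) * d))) hprod)
        nlinarith [hup, hKnonneg]
      have hpos1 : (0:ℝ) ≤ (d : ℝ) ^ (2*(q+r)+1) / (Fintype.card V : ℝ) := by positivity
      have hpos2 : (0:ℝ) ≤ lam ^ (2*q-2) * (d : ℝ) ^ (2*r+2) := by positivity
      have hpos3 : (0:ℝ) ≤ lam * (d : ℝ) ^ (2*(q+r)) := by positivity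
      linarith [le_trans hcast hmain]
    · -- case lam < d : eigenvector of d is flat
      have hother : ∀ i, i ≠ i₀ → hA.eigenvalues i ≠ (d : ℝ) := by
        intro i hi heq
        have h1 := hlam i hi
        rw [heq, abs_of_nonneg hdR] at h1
        linarith
      have hflat := aux_flat Γ hd hA i₀ hother
      have hsplit : ∀ m : ℕ, ∀ v : V, ((Γ.adjMatrix ℝ) ^ m) v v
          = (d:ℝ)^m / (Fintype.card V : ℝ) + (∑ i ∈ Finset.univ.erase i₀, hA.eigenvalues i ^ (m) * (hA.eigenvectorBasis i v * hA.eigenvectorBasis i v)) := by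
        intro m v
        rw [aux_key Γ hA m v v, ← Finset.add_sum_erase _ _ (Finset.mem_univ i₀), h0, hflat v]
        rw [mul_one_div]
      have hTsum : ∀ m : ℕ, (∑ v, (∑ i ∈ Finset.univ.erase i₀, hA.eigenvalues i ^ (m) * (hA.eigenvectorBasis i v * hA.eigenvectorBasis i v))) = ∑ i ∈ Finset.univ.erase i₀, hA.eigenvalues i ^ (m) := by
        intro m
        rw [Finset.sum_comm]
        apply Finset.sum_congr rfl; intro i _
        rw [← Finset.mul_sum, aux_orthog Γ hA i i]
        simp
      have hE2 : (∑ i ∈ Finset.univ.erase i₀, hA.eigenvalues i ^ 2) ≤ (Fintype.card V : ℝ) * d := by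
        rw [← hsumsq]
        apply Finset.sum_le_sum_of_subset_of_nonneg (Finset.erase_subset _ _)
        intro i _ _
        exact sq_nonneg _
      have habsE : ∀ i ∈ Finset.univ.erase i₀, |hA.eigenvalues i| ≤ lam := by
        intro i hi
        exact hlam i (Finset.ne_of_mem_erase hi)
      have hB1 : (∑ i ∈ Finset.univ.erase i₀, hA.eigenvalues i ^ (2*q)) ≤ lam ^ (2*q-2) * ((Fintype.card V : ℝ) * d) := by
        calc ∑ i ∈ Finset.univ.erase i₀, hA.eigenvalues i ^ (2*q)
            = ∑ i ∈ Finset.univ.erase i₀, |hA.eigenvalues i| ^ (2*q) := by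
              apply Finset.sum_congr rfl; intro i _
              rw [← abs_pow, abs_of_nonneg (Even.pow_nonneg ⟨q, by ring⟩ _)]
          _ ≤ lam ^ (2*q-2) * ∑ i ∈ Finset.univ.erase i₀, hA.eigenvalues i ^ 2 :=
              aux_abs_pow_sum_bound Γ hA _ lam hlam0 habsE (2*q) (by omega)
          _ ≤ lam ^ (2*q-2) * ((Fintype.card V : ℝ) * d) :=
              mul_le_mul_of_nonneg_left hE2 (by positivity)
      have hB2 : |∑ i ∈ Finset.univ.erase i₀, hA.eigenvalues i ^ (2*r+1)| ≤ lam ^ (2*r-1) * ((Fintype.card V : ℝ) * d) := by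
        calc |∑ i ∈ Finset.univ.erase i₀, hA.eigenvalues i ^ (2*r+1)|
            ≤ ∑ i ∈ Finset.univ.erase i₀, |hA.eigenvalues i ^ (2*r+1)| :=
              Finset.abs_sum_le_sum_abs _ _
          _ = ∑ i ∈ Finset.univ.erase i₀, |hA.eigenvalues i| ^ (2*r+1) := by
              apply Finset.sum_congr rfl; intro i _
              rw [abs_pow]
          _ ≤ lam ^ (2*r-1) * ∑ i ∈ Finset.univ.erase i₀, hA.eigenvalues i ^ 2 := by
              have hb := aux_abs_pow_sum_bound Γ hA _ lam hlam0 habsE (2*r+1) (by omega)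
              simpa using hb
          _ ≤ lam ^ (2*r-1) * ((Fintype.card V : ℝ) * d) :=
              mul_le_mul_of_nonneg_left hE2 (by positivity)
      have s1 : (∑ v, (∑ i ∈ Finset.univ.erase i₀, hA.eigenvalues i ^ (2*q) * (hA.eigenvectorBasis i v * hA.eigenvectorBasis i v)) ^ 2) ≤ lam ^ (4*q-2) * ((Fintype.card V : ℝ) * d) := by
        calc (∑ v, (∑ i ∈ Finset.univ.erase i₀, hA.eigenvalues i ^ (2*q) * (hA.eigenvectorBasis i v * hA.eigenvectorBasis i v)) ^ 2)
            ≤ ∑ i ∈ Finset.univ.erase i₀, (hA.eigenvalues i ^ (2*q)) ^ 2 :=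
              aux_diag_sq_bound Γ hA _ _
          _ = ∑ i ∈ Finset.univ.erase i₀, |hA.eigenvalues i| ^ (4*q) := by
              apply Finset.sum_congr rfl; intro i _
              rw [← pow_mul, ← abs_pow, abs_of_nonneg (Even.pow_nonneg ⟨2*q, by ring⟩ _)]
              congr 1; omega
          _ ≤ lam ^ (4*q-2) * ∑ i ∈ Finset.univ.erase i₀, hA.eigenvalues i ^ 2 :=
              aux_abs_pow_sum_bound Γ hA _ lam hlam0 habsE (4*q) (by omega)
          _ ≤ lam ^ (4*q-2) * ((Fintype.card V : ℝ) * d) :=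
              mul_le_mul_of_nonneg_left hE2 (by positivity)
      have s2 : (∑ v, (∑ i ∈ Finset.univ.erase i₀, hA.eigenvalues i ^ (2*r+1) * (hA.eigenvectorBasis i v * hA.eigenvectorBasis i v)) ^ 2) ≤ lam ^ (4*r) * ((Fintype.card V : ℝ) * d) := by
        calc (∑ v, (∑ i ∈ Finset.univ.erase i₀, hA.eigenvalues i ^ (2*r+1) * (hA.eigenvectorBasis i v * hA.eigenvectorBasis i v)) ^ 2)
            ≤ ∑ i ∈ Finset.univ.erase i₀, (hA.eigenvalues i ^ (2*r+1)) ^ 2 :=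
              aux_diag_sq_bound Γ hA _ _
          _ = ∑ i ∈ Finset.univ.erase i₀, |hA.eigenvalues i| ^ (4*r+2) := by
              apply Finset.sum_congr rfl; intro i _
              rw [← pow_mul, ← abs_pow, abs_of_nonneg (Even.pow_nonneg ⟨2*r+1, by ring⟩ _)]
              congr 1; omega
          _ ≤ lam ^ (4*r) * ∑ i ∈ Finset.univ.erase i₀, hA.eigenvalues i ^ 2 := by
              have hb := aux_abs_pow_sum_bound Γ hA _ lam hlam0 habsE (4*r+2) (by omega)
              simpa using hb
          _ ≤ lam ^ (4*r) * ((Fintype.card V : ℝ) * d) :=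
              mul_le_mul_of_nonneg_left hE2 (by positivity)
      have cauchy : (∑ v, (∑ i ∈ Finset.univ.erase i₀, hA.eigenvalues i ^ (2*q) * (hA.eigenvectorBasis i v * hA.eigenvectorBasis i v)) * (∑ i ∈ Finset.univ.erase i₀, hA.eigenvalues i ^ (2*r+1) * (hA.eigenvectorBasis i v * hA.eigenvectorBasis i v))) ^ 2
          ≤ (∑ v, (∑ i ∈ Finset.univ.erase i₀, hA.eigenvalues i ^ (2*q) * (hA.eigenvectorBasis i v * hA.eigenvectorBasis i v)) ^ 2) * (∑ v, (∑ i ∈ Finset.univ.erase i₀, hA.eigenvalues i ^ (2*r+1) * (hA.eigenvectorBasis i v * hA.eigenvectorBasis i v)) ^ 2) := by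
        exact Finset.sum_mul_sq_le_sq_mul_sq Finset.univ
          (fun v => ∑ i ∈ Finset.univ.erase i₀, hA.eigenvalues i ^ (2*q) * (hA.eigenvectorBasis i v * hA.eigenvectorBasis i v)) (fun v => ∑ i ∈ Finset.univ.erase i₀, hA.eigenvalues i ^ (2*r+1) * (hA.eigenvectorBasis i v * hA.eigenvectorBasis i v))
      have hprod : (lam ^ (4*q-2) * ((Fintype.card V : ℝ) * d)) * (lam ^ (4*r) * ((Fintype.card V : ℝ) * d))
          = (lam ^ (2*(q+r)-1) * ((Fintype.card V : ℝ) * d)) ^ 2 := by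
        have hl : lam ^ (4*q-2) * lam ^ (4*r) = (lam ^ (2*(q+r)-1)) ^ 2 := by
          rw [← pow_add, ← pow_mul]
          congr 1; omega
        calc (lam ^ (4*q-2) * ((Fintype.card V : ℝ) * d)) * (lam ^ (4*r) * ((Fintype.card V : ℝ) * d))
            = (lam ^ (4*q-2) * lam ^ (4*r)) * ((Fintype.card V : ℝ) * d) ^ 2 := by ring
          _ = _ := by rw [hl]; ring
      have hB3 : (∑ v, (∑ i ∈ Finset.univ.erase i₀, hA.eigenvalues i ^ (2*q) * (hA.eigenvectorBasis i v * hA.eigenvectorBasis i v)) * (∑ i ∈ Finset.univ.erase i₀, hA.eigenvalues i ^ (2*r+1) * (hA.eigenvectorBasis i v * hA.eigenvectorBasis i v))) ≤ lam ^ (2*(q+r)-1) * ((Fintype.card V : ℝ) * d) := by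
        have hsq1 : (0:ℝ) ≤ ∑ v, (∑ i ∈ Finset.univ.erase i₀, hA.eigenvalues i ^ (2*q) * (hA.eigenvectorBasis i v * hA.eigenvectorBasis i v)) ^ 2 := Finset.sum_nonneg (fun v _ => sq_nonneg _)
        have hsq2 : (0:ℝ) ≤ ∑ v, (∑ i ∈ Finset.univ.erase i₀, hA.eigenvalues i ^ (2*r+1) * (hA.eigenvectorBasis i v * hA.eigenvectorBasis i v)) ^ 2 := Finset.sum_nonneg (fun v _ => sq_nonneg _)
        have hKnn : (0:ℝ) ≤ lam ^ (2*(q+r)-1) * ((Fintype.card V : ℝ) * d) := by positivity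
        have hup := le_trans cauchy (le_of_le_of_eq
          (mul_le_mul s1 s2 hsq2 (by positivity : (0:ℝ) ≤ lam ^ (4*q-2) * ((Fintype.card V : ℝ) * d))) hprod)
        nlinarith [hup, hKnn]
      have hexp : ∑ v, (((Γ.adjMatrix ℝ) ^ (2*q)) v v * ((Γ.adjMatrix ℝ) ^ (2*r+1)) v v)
          = (Fintype.card V : ℝ) * (((d:ℝ)^(2*q) / (Fintype.card V : ℝ)) * ((d:ℝ)^(2*r+1) / (Fintype.card V : ℝ)))
            + ((d:ℝ)^(2*r+1) / (Fintype.card V : ℝ)) * (∑ i ∈ Finset.univ.erase i₀, hA.eigenvalues i ^ (2*q))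
            + ((d:ℝ)^(2*q) / (Fintype.card V : ℝ)) * (∑ i ∈ Finset.univ.erase i₀, hA.eigenvalues i ^ (2*r+1))
            + ∑ v, (∑ i ∈ Finset.univ.erase i₀, hA.eigenvalues i ^ (2*q) * (hA.eigenvectorBasis i v * hA.eigenvectorBasis i v)) * (∑ i ∈ Finset.univ.erase i₀, hA.eigenvalues i ^ (2*r+1) * (hA.eigenvectorBasis i v * hA.eigenvectorBasis i v)) := by
        calc ∑ v, (((Γ.adjMatrix ℝ) ^ (2*q)) v v * ((Γ.adjMatrix ℝ) ^ (2*r+1)) v v)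
            = ∑ v, (((d:ℝ)^(2*q) / (Fintype.card V : ℝ) + (∑ i ∈ Finset.univ.erase i₀, hA.eigenvalues i ^ (2*q) * (hA.eigenvectorBasis i v * hA.eigenvectorBasis i v)))
                * ((d:ℝ)^(2*r+1) / (Fintype.card V : ℝ) + (∑ i ∈ Finset.univ.erase i₀, hA.eigenvalues i ^ (2*r+1) * (hA.eigenvectorBasis i v * hA.eigenvectorBasis i v)))) := by
              apply Finset.sum_congr rfl; intro v _
              rw [hsplit (2*q) v, hsplit (2*r+1) v]
          _ = ∑ v, (((d:ℝ)^(2*q) / (Fintype.card V : ℝ)) * ((d:ℝ)^(2*r+1) / (Fintype.card V : ℝ))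
                + (((d:ℝ)^(2*r+1) / (Fintype.card V : ℝ)) * (∑ i ∈ Finset.univ.erase i₀, hA.eigenvalues i ^ (2*q) * (hA.eigenvectorBasis i v * hA.eigenvectorBasis i v))
                + (((d:ℝ)^(2*q) / (Fintype.card V : ℝ)) * (∑ i ∈ Finset.univ.erase i₀, hA.eigenvalues i ^ (2*r+1) * (hA.eigenvectorBasis i v * hA.eigenvectorBasis i v))
                + (∑ i ∈ Finset.univ.erase i₀, hA.eigenvalues i ^ (2*q) * (hA.eigenvectorBasis i v * hA.eigenvectorBasis i v)) * (∑ i ∈ Finset.univ.erase i₀, hA.eigenvalues i ^ (2*r+1) * (hA.eigenvectorBasis i v * hA.eigenvectorBasis i v))))) := by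
              apply Finset.sum_congr rfl; intro v _
              ring
          _ = _ := by
              rw [Finset.sum_add_distrib, Finset.sum_add_distrib, Finset.sum_add_distrib,
                Finset.sum_const, ← Finset.mul_sum, ← Finset.mul_sum, Finset.card_univ,
                nsmul_eq_mul, hTsum (2*q), hTsum (2*r+1)]
              ring
      have hG1 : (Fintype.card V : ℝ) * (((d:ℝ)^(2*q) / (Fintype.card V : ℝ)) * ((d:ℝ)^(2*r+1) / (Fintype.card V : ℝ))) = (d : ℝ) ^ (2*(q+r)+1) / (Fintype.card V : ℝ) := by
        have hpow : (d:ℝ)^(2*q) * (d:ℝ)^(2*r+1) = (d:ℝ)^(2*(q+r)+1) := by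
          rw [← pow_add]; congr 1; omega
        field_simp
        rw [← hpow]
      have hG2 : ((d:ℝ)^(2*r+1) / (Fintype.card V : ℝ)) * (∑ i ∈ Finset.univ.erase i₀, hA.eigenvalues i ^ (2*q)) ≤ lam ^ (2*q-2) * (d : ℝ) ^ (2*r+2) := by
        calc ((d:ℝ)^(2*r+1) / (Fintype.card V : ℝ)) * (∑ i ∈ Finset.univ.erase i₀, hA.eigenvalues i ^ (2*q))
            ≤ ((d:ℝ)^(2*r+1) / (Fintype.card V : ℝ)) * (lam ^ (2*q-2) * ((Fintype.card V : ℝ) * d)) :=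
              mul_le_mul_of_nonneg_left hB1 (by positivity)
          _ = lam ^ (2*q-2) * ((d:ℝ)^(2*r+1) * d) := by
              field_simp
          _ = lam ^ (2*q-2) * (d : ℝ) ^ (2*r+2) := by rw [← pow_succ]
      have hG3 : ((d:ℝ)^(2*q) / (Fintype.card V : ℝ)) * (∑ i ∈ Finset.univ.erase i₀, hA.eigenvalues i ^ (2*r+1)) ≤ lam * (d : ℝ) ^ (2*(q+r)) := by
        calc ((d:ℝ)^(2*q) / (Fintype.card V : ℝ)) * (∑ i ∈ Finset.univ.erase i₀, hA.eigenvalues i ^ (2*r+1))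
            ≤ ((d:ℝ)^(2*q) / (Fintype.card V : ℝ)) * (lam ^ (2*r-1) * ((Fintype.card V : ℝ) * d)) := by
              apply mul_le_mul_of_nonneg_left _ (by positivity)
              exact le_trans (le_abs_self _) hB2
          _ = lam ^ (2*r-1) * ((d:ℝ)^(2*q) * d) := by
              field_simp
          _ = lam ^ (2*r-1) * (d:ℝ)^(2*q+1) := by rw [← pow_succ]
          _ = lam * (lam ^ (2*r-2) * (d:ℝ)^(2*q+1)) := by
              rw [show 2*r-1 = (2*r-2)+1 from by omega, pow_succ]
              ring
          _ ≤ lam * ((d:ℝ)^(2*r-2) * (d:ℝ)^(2*q+1)) := by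
              apply mul_le_mul_of_nonneg_left _ hlam0
              apply mul_le_mul_of_nonneg_right _ (by positivity)
              exact pow_le_pow_left₀ hlam0 (le_of_lt hcase) _
          _ = lam * (d:ℝ)^(2*r-2+(2*q+1)) := by rw [← pow_add]
          _ ≤ lam * (d : ℝ) ^ (2*(q+r)) := by
              apply mul_le_mul_of_nonneg_left _ hlam0
              apply pow_le_pow_right₀ hd1R (by omega)
      have hG4 : (∑ v, (∑ i ∈ Finset.univ.erase i₀, hA.eigenvalues i ^ (2*q) * (hA.eigenvectorBasis i v * hA.eigenvectorBasis i v)) * (∑ i ∈ Finset.univ.erase i₀, hA.eigenvalues i ^ (2*r+1) * (hA.eigenvectorBasis i v * hA.eigenvectorBasis i v))) ≤ lam ^ (2*(q+r)-1) * d * (Fintype.card V : ℝ) :=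
        le_trans hB3 (le_of_eq (by ring))
      calc (homCount (gluedCycles q r) Γ : ℝ)
          ≤ ∑ v, (((Γ.adjMatrix ℝ) ^ (2*q)) v v * ((Γ.adjMatrix ℝ) ^ (2*r+1)) v v) := hcast
        _ = _ := hexp
        _ ≤ (d : ℝ) ^ (2*(q+r)+1) / (Fintype.card V : ℝ)
              + lam ^ (2*q-2) * (d : ℝ) ^ (2*r+2)
              + lam * (d : ℝ) ^ (2*(q+r))
              + lam ^ (2*(q+r)-1) * d * (Fintype.card V : ℝ) := by
            have h1 := hG1.le
            exact add_le_add (add_le_add (add_le_add h1 hG2) hG3) hG4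
        _ = _ := by norm_num
end

section
/- Let Γ be an (n,d,λ)-graph, let q ≥ 1 and r ≥ 1 be integers, and let H be the graph consisting of an edge-disjoint cycle C_{2q} and cycle C_{2r+1} sharing exactly one vertex. Then | h_H(Γ) − (d^{2r+1}/n)·h_{C_{2q}}(Γ) | ≤ λ · h_{C_{2(q+r)}}(Γ). -/
open Finset SimpleGraph

open Matrix

lemma embC_injOn {q : ℕ} (hq : 1 ≤ q) {i j : ℕ} (h : embC q i = embC q j) : i = j := by
  unfold embC at h; split_ifs at h <;> omega

lemma prod_ext' {A B : Type*} {a b : A × B} (h1 : a.1 = b.1) (h2 : a.2 = b.2) : a = b := by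
  obtain ⟨x, y⟩ := a; obtain ⟨z, w⟩ := b; cases h1; cases h2; rfl

set_option linter.unusedSectionVars false

variable {V : Type} [Fintype V] [DecidableEq V] (Γ : SimpleGraph V) [DecidableRel Γ.Adj]

def cseq (m : ℕ) : Finset (Fin (m+1) → V) :=
  univ.filter fun f => f 0 = f (Fin.last m) ∧
    ∀ i : Fin m, Γ.Adj (f i.castSucc) (f i.succ)

def wseq (m : ℕ) (v u : V) : Finset (Fin (m+1) → V) :=
  univ.filter fun f => f 0 = v ∧ f (Fin.last m) = u ∧
    ∀ i : Fin m, Γ.Adj (f i.castSucc) (f i.succ)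

lemma fin_congr {n : ℕ} (f : Fin n → V) {a b : Fin n} (h : a.val = b.val) : f a = f b := by
  rw [Fin.ext h]

lemma cseq_step' {m : ℕ} (f : Fin (m+1) → V) (hf : f ∈ cseq Γ m) {a b : ℕ} (ham : a < m)
    (hab : b = (a+1) % m) (ha : a < m+1) (hb : b < m+1) :
    Γ.Adj (f ⟨a, ha⟩) (f ⟨b, hb⟩) := by
  subst hab
  rw [cseq, mem_filter] at hf
  obtain ⟨-, hcl, hadj⟩ := hf
  have h := hadj ⟨a, ham⟩
  rcases Nat.lt_or_ge (a+1) m with h1 | h1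
  · have e1 : (⟨a, ham⟩ : Fin m).castSucc = ⟨a, ha⟩ := rfl
    have e2 : (⟨a, ham⟩ : Fin m).succ = ⟨(a+1) % m, hb⟩ :=
      Fin.ext (by simp [Fin.val_succ, Nat.mod_eq_of_lt h1])
    rwa [e1, e2] at h
  · have him : a + 1 = m := by omega
    have e1 : (⟨a, ham⟩ : Fin m).castSucc = ⟨a, ha⟩ := rfl
    have e2 : (⟨a, ham⟩ : Fin m).succ = Fin.last m :=
      Fin.ext (by simp [Fin.val_succ, Fin.last, him])
    rw [e1, e2] at h
    have e3 : (⟨(a+1) % m, hb⟩ : Fin (m+1)) = 0 := Fin.ext (by simp [him])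
    rw [e3, hcl]
    exact h

section glued

variable (q r : ℕ)

lemma embC_lt (hq : 1 ≤ q) (hr : 1 ≤ r) {i : ℕ} (hi : i < 2*r+1) : embC q i < 2*q + 2*r := by
  unfold embC; split <;> omega

def pseq : Finset ((Fin (2*q+1) → V) × (Fin (2*r+2) → V)) :=
  univ.filter fun p => p.1 ∈ cseq Γ (2*q) ∧ p.2 ∈ cseq Γ (2*r+1) ∧ p.1 0 = p.2 0

variable {q r}

lemma glued_adj_left (hq : 1 ≤ q) (hr : 1 ≤ r) {i : ℕ} (hi : i < 2*q) :
    (gluedCycles q r).Adj ⟨i, by omega⟩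
      ⟨(i+1) % (2*q), by have := Nat.mod_lt (i+1) (y := 2*q) (by omega); omega⟩ := by
  rw [gluedCycles, SimpleGraph.fromRel_adj]
  constructor
  · intro hcon
    have hv : i = (i+1) % (2*q) := congrArg Fin.val hcon
    rcases Nat.lt_or_ge (i+1) (2*q) with h1 | h1
    · rw [Nat.mod_eq_of_lt h1] at hv; omega
    · have h2 : i + 1 = 2*q := by omega
      rw [h2, Nat.mod_self] at hv; omega
  · left; left; exact ⟨i, hi, rfl, rfl⟩

lemma glued_adj_right (hq : 1 ≤ q) (hr : 1 ≤ r) {i : ℕ} (hi : i < 2*r+1) :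
    (gluedCycles q r).Adj ⟨embC q i, embC_lt q r hq hr hi⟩
      ⟨embC q ((i+1) % (2*r+1)), embC_lt q r hq hr (Nat.mod_lt _ (by omega))⟩ := by
  rw [gluedCycles, SimpleGraph.fromRel_adj]
  constructor
  · intro hcon
    have hv : embC q i = embC q ((i+1) % (2*r+1)) := congrArg Fin.val hcon
    have hv2 : i = (i+1) % (2*r+1) := embC_injOn hq hv
    rcases Nat.lt_or_ge (i+1) (2*r+1) with h1 | h1
    · rw [Nat.mod_eq_of_lt h1] at hv2; omega
    · have h2 : i + 1 = 2*r+1 := by omega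
      rw [h2, Nat.mod_self] at hv2; omega
  · left; right; exact ⟨i, hi, rfl, rfl⟩

/-- glue a pair of closed sequences into a map on the glued vertex set -/
def glueFun (p : (Fin (2*q+1) → V) × (Fin (2*r+2) → V)) : Fin (2*q+2*r) → V :=
  fun x => if hx : x.val < 2*q then p.1 ⟨x.val, by omega⟩
    else p.2 ⟨x.val - 2*q + 1, by have := x.isLt; omega⟩

lemma glueFun_apply_lt (p : (Fin (2*q+1) → V) × (Fin (2*r+2) → V)) {x : Fin (2*q+2*r)}
    (hx : x.val < 2*q) (hx1 : x.val < 2*q+1) : glueFun p x = p.1 ⟨x.val, hx1⟩ := by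
  rw [glueFun]; exact dif_pos hx

lemma glueFun_apply_ge (p : (Fin (2*q+1) → V) × (Fin (2*r+2) → V)) {x : Fin (2*q+2*r)}
    (hx : ¬ x.val < 2*q) (hx1 : x.val - 2*q + 1 < 2*r+2) :
    glueFun p x = p.2 ⟨x.val - 2*q + 1, hx1⟩ := by
  rw [glueFun]; exact dif_neg hx

lemma glueFun_emb (hq : 1 ≤ q) (p : (Fin (2*q+1) → V) × (Fin (2*r+2) → V))
    (hshare : p.1 0 = p.2 0)
    {i : ℕ} (hi : i < 2*r+1) (hlt : embC q i < 2*q+2*r) (hi2 : i < 2*r+2) :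
    glueFun p ⟨embC q i, hlt⟩ = p.2 ⟨i, hi2⟩ := by
  rcases eq_or_ne i 0 with rfl | hi0
  · have hv : embC q 0 = 0 := if_pos rfl
    have hx : (⟨embC q 0, hlt⟩ : Fin (2*q+2*r)).val < 2*q := by
      show embC q 0 < 2*q; rw [hv]; omega
    have hx1 : (⟨embC q 0, hlt⟩ : Fin (2*q+2*r)).val < 2*q+1 := by omega
    calc glueFun p ⟨embC q 0, hlt⟩ = p.1 ⟨embC q 0, hx1⟩ := glueFun_apply_lt p hx hx1
      _ = p.1 0 := fin_congr p.1 (by simp [hv])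
      _ = p.2 0 := hshare
      _ = p.2 ⟨0, hi2⟩ := fin_congr p.2 (by simp)
  · have hx : ¬ (⟨embC q i, hlt⟩ : Fin (2*q+2*r)).val < 2*q := by
      show ¬ embC q i < 2*q; unfold embC; rw [if_neg hi0]; omega
    have hx1 : (⟨embC q i, hlt⟩ : Fin (2*q+2*r)).val - 2*q + 1 < 2*r+2 := by
      have : embC q i < 2*q+2*r := hlt; omega
    calc glueFun p ⟨embC q i, hlt⟩ = p.2 ⟨embC q i - 2*q + 1, hx1⟩ := glueFun_apply_ge p hx hx1
      _ = p.2 ⟨i, hi2⟩ := fin_congr p.2 (by show embC q i - 2*q+1 = i; unfold embC; rw [if_neg hi0]; omega)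

lemma glueFun_adj (hq : 1 ≤ q) (hr : 1 ≤ r) (p : (Fin (2*q+1) → V) × (Fin (2*r+2) → V))
    (h1 : p.1 ∈ cseq Γ (2*q)) (h2 : p.2 ∈ cseq Γ (2*r+1)) (hshare : p.1 0 = p.2 0)
    (a b : Fin (2*q+2*r))
    (hrel : (∃ i : ℕ, i < 2 * q ∧ a.val = i ∧ b.val = (i + 1) % (2 * q)) ∨
      (∃ i : ℕ, i < 2 * r + 1 ∧ a.val = embC q i ∧ b.val = embC q ((i + 1) % (2 * r + 1)))) :
    Γ.Adj (glueFun p a) (glueFun p b) := by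
  rcases hrel with ⟨i, hi, ha, hb⟩ | ⟨i, hi, ha, hb⟩
  · have hxa : a.val < 2*q := by omega
    have hxb : b.val < 2*q := by rw [hb]; exact Nat.mod_lt _ (by omega)
    rw [glueFun_apply_lt p hxa (by omega), glueFun_apply_lt p hxb (by omega)]
    exact cseq_step' Γ p.1 h1 (by omega : a.val < 2*q) (by rw [ha, hb]) _ _
  · have ea : a = ⟨embC q i, embC_lt q r hq hr hi⟩ := Fin.ext ha
    have eb : b = ⟨embC q ((i+1) % (2*r+1)), embC_lt q r hq hr (Nat.mod_lt _ (by omega))⟩ :=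
      Fin.ext hb
    rw [ea, eb, glueFun_emb hq p hshare hi _ (by omega),
      glueFun_emb hq p hshare (Nat.mod_lt _ (by omega)) _
        (by have := Nat.mod_lt (i+1) (y := 2*r+1) (by omega); omega)]
    exact cseq_step' Γ p.2 h2 (by omega : i < 2*r+1) rfl _ _

/-- the pair of closed sequences associated to a hom from the glued graph -/
def gluedToPair (hq : 1 ≤ q) (hr : 1 ≤ r) (φ : gluedCycles q r →g Γ) :
    (Fin (2*q+1) → V) × (Fin (2*r+2) → V) :=
  (fun i => φ ⟨i.val % (2*q), by have := Nat.mod_lt i.val (y := 2*q) (by omega); omega⟩,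
   fun i => φ ⟨embC q (i.val % (2*r+1)), embC_lt q r hq hr (Nat.mod_lt _ (by omega))⟩)

lemma gluedToPair_fst (hq : 1 ≤ q) (hr : 1 ≤ r) (φ : gluedCycles q r →g Γ)
    (i : Fin (2*q+1)) (h : i.val % (2*q) < 2*q+2*r) :
    (gluedToPair Γ hq hr φ).1 i = φ ⟨i.val % (2*q), h⟩ := rfl

lemma gluedToPair_snd (hq : 1 ≤ q) (hr : 1 ≤ r) (φ : gluedCycles q r →g Γ)
    (i : Fin (2*r+2)) (h : embC q (i.val % (2*r+1)) < 2*q+2*r) :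
    (gluedToPair Γ hq hr φ).2 i = φ ⟨embC q (i.val % (2*r+1)), h⟩ := rfl

lemma gluedToPair_mem (hq : 1 ≤ q) (hr : 1 ≤ r) (φ : gluedCycles q r →g Γ) :
    gluedToPair Γ hq hr φ ∈ pseq Γ q r := by
  have h2q : 0 < 2*q := by omega
  have h2r : 0 < 2*r+1 := by omega
  rw [pseq, mem_filter]
  refine ⟨mem_univ _, ?_, ?_, ?_⟩
  · rw [cseq, mem_filter]
    refine ⟨mem_univ _, ?_, ?_⟩
    · rw [gluedToPair_fst Γ hq hr φ 0 (by have := Nat.mod_lt ((0 : Fin (2*q+1)).val) h2q; omega),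
        gluedToPair_fst Γ hq hr φ (Fin.last (2*q)) (by have := Nat.mod_lt ((Fin.last (2*q)).val) h2q; omega)]
      exact congrArg _ (Fin.ext (by simp [Fin.last]))
    · intro i
      have hc : (i.castSucc.val) % (2*q) < 2*q+2*r := by have := Nat.mod_lt i.castSucc.val h2q; omega
      have hs : (i.succ.val) % (2*q) < 2*q+2*r := by have := Nat.mod_lt i.succ.val h2q; omega
      rw [gluedToPair_fst Γ hq hr φ i.castSucc hc, gluedToPair_fst Γ hq hr φ i.succ hs]
      have e1 : (⟨i.castSucc.val % (2*q), hc⟩ : Fin (2*q+2*r)) = ⟨i.val, by omega⟩ :=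
        Fin.ext (by simp [Nat.mod_eq_of_lt i.isLt])
      have e2 : (⟨i.succ.val % (2*q), hs⟩ : Fin (2*q+2*r)) =
          ⟨(i.val+1) % (2*q), by have := Nat.mod_lt (i.val+1) h2q; omega⟩ :=
        Fin.ext (by simp [Fin.val_succ])
      rw [e1, e2]
      exact φ.map_rel (glued_adj_left hq hr i.isLt)
  · rw [cseq, mem_filter]
    refine ⟨mem_univ _, ?_, ?_⟩
    · rw [gluedToPair_snd Γ hq hr φ 0 (embC_lt q r hq hr (Nat.mod_lt _ h2r)),
        gluedToPair_snd Γ hq hr φ (Fin.last (2*r+1)) (embC_lt q r hq hr (Nat.mod_lt _ h2r))]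
      exact congrArg _ (Fin.ext (by simp [Fin.last]))
    · intro i
      have hc : embC q (i.castSucc.val % (2*r+1)) < 2*q+2*r := embC_lt q r hq hr (Nat.mod_lt _ h2r)
      have hs : embC q (i.succ.val % (2*r+1)) < 2*q+2*r := embC_lt q r hq hr (Nat.mod_lt _ h2r)
      rw [gluedToPair_snd Γ hq hr φ i.castSucc hc, gluedToPair_snd Γ hq hr φ i.succ hs]
      have e1 : (⟨embC q (i.castSucc.val % (2*r+1)), hc⟩ : Fin (2*q+2*r)) =
          ⟨embC q i.val, embC_lt q r hq hr i.isLt⟩ :=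
        Fin.ext (by simp [Nat.mod_eq_of_lt i.isLt])
      have e2 : (⟨embC q (i.succ.val % (2*r+1)), hs⟩ : Fin (2*q+2*r)) =
          ⟨embC q ((i.val+1) % (2*r+1)), embC_lt q r hq hr (Nat.mod_lt _ h2r)⟩ :=
        Fin.ext (by simp [Fin.val_succ])
      rw [e1, e2]
      exact φ.map_rel (glued_adj_right hq hr i.isLt)
  · rw [gluedToPair_fst Γ hq hr φ 0 (by have := Nat.mod_lt ((0 : Fin (2*q+1)).val) h2q; omega),
      gluedToPair_snd Γ hq hr φ 0 (embC_lt q r hq hr (Nat.mod_lt _ h2r))]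
    exact congrArg _ (Fin.ext (by simp [embC]))

lemma homCount_glued_eq (hq : 1 ≤ q) (hr : 1 ≤ r) :
    Nat.card (gluedCycles q r →g Γ) = (pseq Γ q r).card := by
  have h2q : 0 < 2*q := by omega
  have h2r : 0 < 2*r+1 := by omega
  have e : (gluedCycles q r →g Γ) ≃ {p // p ∈ pseq Γ q r} :=
    { toFun := fun φ => ⟨gluedToPair Γ hq hr φ, gluedToPair_mem Γ hq hr φ⟩
      invFun := fun pp =>
        { toFun := glueFun pp.1
          map_rel' := by
            intro a b hab
            have hp := pp.2
            simp only [pseq, mem_filter, mem_univ, true_and] at hp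
            obtain ⟨hp1, hp2, hps⟩ := hp
            rw [gluedCycles, SimpleGraph.fromRel_adj] at hab
            obtain ⟨hne, h | h⟩ := hab
            · exact glueFun_adj Γ hq hr pp.1 hp1 hp2 hps a b h
            · exact (glueFun_adj Γ hq hr pp.1 hp1 hp2 hps b a h).symm }
      left_inv := by
        intro φ
        apply DFunLike.ext
        intro x
        show glueFun (gluedToPair Γ hq hr φ) x = φ x
        rcases Nat.lt_or_ge x.val (2*q) with h1 | h1
        · have hx1 : x.val < 2*q+1 := by omega
          rw [glueFun_apply_lt (gluedToPair Γ hq hr φ) h1 hx1]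
          have hh : (⟨x.val, hx1⟩ : Fin (2*q+1)).val % (2*q) < 2*q+2*r := by
            show x.val % (2*q) < 2*q+2*r
            have := Nat.mod_lt x.val h2q; omega
          rw [gluedToPair_fst Γ hq hr φ ⟨x.val, hx1⟩ hh]
          exact congrArg _ (Fin.ext (by simp [Nat.mod_eq_of_lt h1]))
        · have hx2 : x.val < 2*q + 2*r := x.isLt
          have hx1 : x.val - 2*q + 1 < 2*r+2 := by omega
          rw [glueFun_apply_ge (gluedToPair Γ hq hr φ) (not_lt.mpr h1) hx1]
          have hh : embC q ((⟨x.val - 2*q + 1, hx1⟩ : Fin (2*r+2)).val % (2*r+1)) < 2*q+2*r :=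
            embC_lt q r hq hr (Nat.mod_lt _ h2r)
          rw [gluedToPair_snd Γ hq hr φ ⟨x.val - 2*q + 1, hx1⟩ hh]
          refine congrArg _ (Fin.ext ?_)
          show embC q ((x.val - 2*q + 1) % (2*r+1)) = x.val
          rw [Nat.mod_eq_of_lt (by omega)]
          unfold embC
          rw [if_neg (by omega)]
          omega
      right_inv := by
        rintro ⟨p, hp⟩
        have hp' := hp
        rw [pseq, mem_filter] at hp'
        obtain ⟨-, hp1, hp2, hps⟩ := hp'
        have hcl1 : p.1 0 = p.1 (Fin.last (2*q)) := by
          rw [cseq, mem_filter] at hp1; exact hp1.2.1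
        have hcl2 : p.2 0 = p.2 (Fin.last (2*r+1)) := by
          rw [cseq, mem_filter] at hp2; exact hp2.2.1
        apply Subtype.ext
        apply prod_ext'
        · funext i
          have hh : i.val % (2*q) < 2*q+2*r := by have := Nat.mod_lt i.val h2q; omega
          have hj : i.val % (2*q) < 2*q := Nat.mod_lt _ h2q
          have hj1 : i.val % (2*q) < 2*q+1 := by omega
          rw [show ((gluedToPair Γ hq hr
            { toFun := glueFun p, map_rel' := by
                intro a b hab
                rw [gluedCycles, SimpleGraph.fromRel_adj] at hab
                obtain ⟨hne, h | h⟩ := hab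
                · exact glueFun_adj Γ hq hr p hp1 hp2 hps a b h
                · exact (glueFun_adj Γ hq hr p hp1 hp2 hps b a h).symm }).1 i =
              glueFun p ⟨i.val % (2*q), hh⟩) from rfl]
          rw [glueFun_apply_lt p (show (⟨i.val % (2*q), hh⟩ : Fin (2*q+2*r)).val < 2*q from hj)
            (show (⟨i.val % (2*q), hh⟩ : Fin (2*q+2*r)).val < 2*q+1 from hj1)]
          rcases Nat.lt_or_ge i.val (2*q) with h1 | h1
          · exact fin_congr p.1 (by simp [Nat.mod_eq_of_lt h1])
          · have hi : i.val = 2*q := by have := i.isLt; omega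
            have e0 : (⟨(⟨i.val % (2*q), hh⟩ : Fin (2*q+2*r)).val, hj1⟩ : Fin (2*q+1)) = 0 :=
              Fin.ext (by simp [hi])
            have el : i = Fin.last (2*q) := Fin.ext (by simp [Fin.last, hi])
            rw [e0, el, ← hcl1]
        · funext i
          have hmod : i.val % (2*r+1) < 2*r+1 := Nat.mod_lt _ h2r
          have hh : embC q (i.val % (2*r+1)) < 2*q+2*r := embC_lt q r hq hr hmod
          have hmod2 : i.val % (2*r+1) < 2*r+2 := by omega
          rw [show ((gluedToPair Γ hq hr
            { toFun := glueFun p, map_rel' := by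
                intro a b hab
                rw [gluedCycles, SimpleGraph.fromRel_adj] at hab
                obtain ⟨hne, h | h⟩ := hab
                · exact glueFun_adj Γ hq hr p hp1 hp2 hps a b h
                · exact (glueFun_adj Γ hq hr p hp1 hp2 hps b a h).symm }).2 i =
              glueFun p ⟨embC q (i.val % (2*r+1)), hh⟩) from rfl]
          rw [glueFun_emb hq p hps hmod hh hmod2]
          rcases Nat.lt_or_ge i.val (2*r+1) with h1 | h1
          · exact fin_congr p.2 (by simp [Nat.mod_eq_of_lt h1])
          · have hi : i.val = 2*r+1 := by have := i.isLt; omega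
            have e0 : (⟨i.val % (2*r+1), hmod2⟩ : Fin (2*r+2)) = 0 := Fin.ext (by simp [hi])
            have el : i = Fin.last (2*r+1) := Fin.ext (by simp [Fin.last, hi])
            rw [e0, el, ← hcl2] }
  rw [Nat.card_congr e, Nat.card_eq_fintype_card, Fintype.card_coe]

lemma card_pseq (hq : 1 ≤ q) (hr : 1 ≤ r) :
    (pseq Γ q r).card = ∑ v, (wseq Γ (2*q) v v).card * (wseq Γ (2*r+1) v v).card := by
  rw [Finset.card_eq_sum_card_fiberwise (f := fun p : (Fin (2*q+1) → V) × (Fin (2*r+2) → V) => p.1 0)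
    (t := univ) (fun x _ => mem_univ _)]
  refine Finset.sum_congr rfl fun v _ => ?_
  rw [← Finset.card_product]
  congr 1
  ext ⟨f, g⟩
  simp only [pseq, wseq, cseq, mem_filter, mem_univ, true_and, mem_product]
  constructor
  · rintro ⟨⟨⟨hcl1, ha1⟩, ⟨hcl2, ha2⟩, hsh⟩, hv⟩
    refine ⟨⟨hv, by rw [← hcl1]; exact hv, ha1⟩, ⟨by rw [← hsh]; exact hv, ?_, ha2⟩⟩
    rw [← hcl2, ← hsh]; exact hv
  · rintro ⟨⟨h10, h1l, ha1⟩, ⟨h20, h2l, ha2⟩⟩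
    exact ⟨⟨⟨h10.trans h1l.symm, ha1⟩, ⟨h20.trans h2l.symm, ha2⟩, h10.trans h20.symm⟩, h10⟩

end glued


lemma card_wseq (m : ℕ) (v u : V) : (wseq Γ m v u).card = ((Γ.adjMatrix ℕ) ^ m) v u := by
  induction m generalizing v with
  | zero =>
    simp only [pow_zero, Matrix.one_apply, wseq]
    rcases eq_or_ne v u with rfl | hvu
    · rw [if_pos rfl]
      have : (univ.filter fun f : Fin 1 → V => f 0 = v ∧ f (Fin.last 0) = v ∧
          ∀ i : Fin 0, Γ.Adj (f i.castSucc) (f i.succ)) = {fun _ => v} := by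
        ext f
        simp only [mem_filter, mem_univ, true_and, mem_singleton]
        constructor
        · rintro ⟨h1, -, -⟩
          funext i
          rw [Subsingleton.elim i 0, h1]
        · rintro rfl
          exact ⟨rfl, rfl, fun i => i.elim0⟩
      rw [this, card_singleton]
    · rw [if_neg hvu, card_eq_zero, eq_empty_iff_forall_notMem]
      intro f hf
      simp only [wseq, mem_filter] at hf
      exact hvu (hf.2.1 ▸ (show f 0 = f (Fin.last 0) from rfl) ▸ hf.2.2.1)
  | succ m ih =>
    rw [pow_succ', Matrix.mul_apply]
    rw [Finset.card_eq_sum_card_fiberwise (f := fun f : Fin (m+2) → V => f 1)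
      (t := univ) (fun x _ => mem_univ _)]
    refine Finset.sum_congr rfl fun w _ => ?_
    rw [SimpleGraph.adjMatrix_apply]
    by_cases hvw : Γ.Adj v w
    · rw [if_pos hvw, one_mul, ← ih w]
      apply Finset.card_bij' (fun f _ => f ∘ Fin.succ) (fun g _ => Fin.cons v g)
      · intro f hf
        simp only [wseq, mem_filter, mem_univ, true_and] at hf ⊢
        obtain ⟨⟨h0, hl, hadj⟩, h1⟩ := hf
        refine ⟨?_, ?_, ?_⟩
        · show f (0 : Fin (m+1)).succ = w
          rw [Fin.succ_zero_eq_one]; exact h1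
        · show f (Fin.last m).succ = u
          rw [Fin.succ_last]; exact hl
        · intro i
          have := hadj i.succ
          rwa [← Fin.succ_castSucc] at this
      · intro g hg
        simp only [wseq, mem_filter, mem_univ, true_and] at hg ⊢
        obtain ⟨h0, hl, hadj⟩ := hg
        refine ⟨⟨?_, ?_, ?_⟩, ?_⟩
        · exact Fin.cons_zero _ _
        · rw [← Fin.succ_last, Fin.cons_succ]; exact hl
        · intro i
          induction i using Fin.cases with
          | zero =>
            rw [Fin.castSucc_zero, Fin.cons_zero, Fin.succ_zero_eq_one,
              show (1 : Fin (m+2)) = (0 : Fin (m+1)).succ from (Fin.succ_zero_eq_one).symm,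
              Fin.cons_succ]
            rw [h0]; exact hvw
          | succ j =>
            rw [← Fin.succ_castSucc, Fin.cons_succ, Fin.cons_succ]
            exact hadj j
        · rw [show (1 : Fin (m+2)) = (0 : Fin (m+1)).succ from (Fin.succ_zero_eq_one).symm,
            Fin.cons_succ]
          exact h0
      · intro f hf
        simp only [wseq, mem_filter] at hf
        have : f 0 = v := hf.1.2.1
        rw [show f ∘ Fin.succ = Fin.tail f from rfl, ← this]
        exact Fin.cons_self_tail f
      · intro g _
        funext i
        exact Fin.cons_succ _ _ _
    · rw [if_neg hvw, zero_mul, card_eq_zero, eq_empty_iff_forall_notMem]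
      intro f hf
      simp only [wseq, mem_filter, mem_univ, true_and] at hf
      obtain ⟨⟨h0, hl, hadj⟩, h1⟩ := hf
      have := hadj 0
      rw [Fin.castSucc_zero, Fin.succ_zero_eq_one, h0, h1] at this
      exact hvw this


lemma card_cseq (m : ℕ) : (cseq Γ m).card = ∑ v, (wseq Γ m v v).card := by
  rw [Finset.card_eq_sum_card_fiberwise (f := fun f : Fin (m+1) → V => f 0)
    (t := univ) (fun x _ => mem_univ _)]
  refine Finset.sum_congr rfl fun v _ => ?_
  congr 1
  ext f
  simp only [cseq, wseq, mem_filter, mem_univ, true_and]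
  constructor
  · rintro ⟨⟨he, ha⟩, hv⟩
    exact ⟨hv, by rw [← he]; exact hv, ha⟩
  · rintro ⟨hv, hu, ha⟩
    exact ⟨⟨by rw [hv, hu], ha⟩, hv⟩



section cycleequiv

variable {k : ℕ}

lemma hmod' {k : ℕ} (j : Fin (k+3)) : j.val % (k+2) < k + 2 := Nat.mod_lt _ (by omega)

/-- from a hom out of the cycle, the associated closed sequence -/
def homToSeq (φ : cycleGraph (k+2) →g Γ) : Fin (k+3) → V :=
  fun j => φ ⟨j.val % (k+2), hmod' j⟩

lemma homToSeq_mem (φ : cycleGraph (k+2) →g Γ) : homToSeq Γ φ ∈ cseq Γ (k+2) := by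
  simp only [cseq, mem_filter, mem_univ, true_and, homToSeq]
  constructor
  · congr 1
    apply Fin.ext
    simp [Fin.last]
  · intro i
    have key : (cycleGraph (k+2)).Adj ⟨i.castSucc.val % (k+2), hmod' i.castSucc⟩
        ⟨i.succ.val % (k+2), hmod' i.succ⟩ := by
      rw [cycleGraph_adj]
      right
      have h2 : (⟨i.succ.val % (k+2), hmod' i.succ⟩ : Fin (k+2)) =
          (⟨i.castSucc.val % (k+2), hmod' i.castSucc⟩ : Fin (k+2)) + 1 := by
        apply Fin.ext
        rw [Fin.add_def]
        simp only [Fin.val_succ, Fin.coe_castSucc, Fin.val_one]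
        rw [Nat.mod_eq_of_lt i.isLt]
      rw [h2]
      exact add_sub_cancel_left _ _
    exact φ.map_rel key

lemma seq_step (f : Fin (k+3) → V) (hf : f ∈ cseq Γ (k+2)) (a : Fin (k+2)) :
    Γ.Adj (f a.castSucc) (f (a + 1).castSucc) := by
  simp only [cseq, mem_filter, mem_univ, true_and] at hf
  obtain ⟨hcl, hadj⟩ := hf
  have h := hadj a
  rcases Nat.lt_or_ge (a.val + 1) (k+2) with h1 | h1
  · have : a.succ = (a + 1).castSucc := by
      apply Fin.ext
      simp only [Fin.val_succ, Fin.coe_castSucc]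
      rw [Fin.add_def]
      simp only [Fin.val_one]
      rw [Nat.mod_eq_of_lt h1]
    rwa [this] at h
  · have ha : a.val = k + 1 := by omega
    have h2 : a.succ = Fin.last (k+2) := by
      apply Fin.ext; simp [Fin.val_succ, ha, Fin.last]
    have h3 : (a + 1 : Fin (k+2)).castSucc = 0 := by
      apply Fin.ext
      rw [Fin.coe_castSucc, Fin.add_def]
      simp [Fin.val_one, ha]
    rw [h2] at h
    rw [h3, hcl]
    exact h

def seqToHom (f : {f // f ∈ cseq Γ (k+2)}) : cycleGraph (k+2) →g Γ where
  toFun := fun a => f.1 a.castSucc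
  map_rel' := by
    intro a b hab
    rw [cycleGraph_adj] at hab
    rcases hab with h | h
    · -- a - b = 1, i.e. a = b + 1
      have : a = b + 1 := by rw [← h]; exact (add_sub_cancel _ _).symm
      subst this
      exact (seq_step Γ f.1 f.2 b).symm
    · have : b = a + 1 := by rw [← h]; exact (add_sub_cancel _ _).symm
      subst this
      exact seq_step Γ f.1 f.2 a

lemma homCount_cycle_eq (k : ℕ) :
    Nat.card (cycleGraph (k+2) →g Γ) = (cseq Γ (k+2)).card := by
  have e : (cycleGraph (k+2) →g Γ) ≃ {f // f ∈ cseq Γ (k+2)} :=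
    { toFun := fun φ => ⟨homToSeq Γ φ, homToSeq_mem Γ φ⟩
      invFun := seqToHom Γ
      left_inv := by
        intro φ
        apply DFunLike.ext
        intro a
        show (homToSeq Γ φ) a.castSucc = φ a
        unfold homToSeq
        congr 1
        apply Fin.ext
        simp only [Fin.coe_castSucc]
        exact Nat.mod_eq_of_lt a.isLt
      right_inv := by
        rintro ⟨f, hf⟩
        apply Subtype.ext
        funext j
        show f (⟨j.val % (k+2), hmod' j⟩ : Fin (k+2)).castSucc = f j
        rcases Nat.lt_or_ge j.val (k+2) with h1 | h1
        · congr 1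
          apply Fin.ext
          simp only [Fin.coe_castSucc]
          exact Nat.mod_eq_of_lt h1
        · have hj : j.val = k + 2 := by omega
          have h2 : j = Fin.last (k+2) := by apply Fin.ext; simpa [Fin.last] using hj
          have h3 : (⟨j.val % (k+2), hmod' j⟩ : Fin (k+2)).castSucc = 0 := by
            apply Fin.ext; simp [hj]
          rw [h3, h2]
          simp only [cseq, mem_filter, mem_univ, true_and] at hf
          exact hf.1 }
  rw [Nat.card_congr e, Nat.card_eq_fintype_card, Fintype.card_coe]

end cycleequiv


section specpart
set_option linter.unusedSectionVars false
lemma adj_cast (m : ℕ) (i j : V) :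
    (((Γ.adjMatrix ℕ ^ m) i j : ℕ) : ℝ) = ((Γ.adjMatrix ℝ) ^ m) i j := by
  have hmap : (Nat.castRingHom ℝ).mapMatrix (Γ.adjMatrix ℕ) = Γ.adjMatrix ℝ := by
    ext a b
    simp [RingHom.mapMatrix_apply, Matrix.map_apply, SimpleGraph.adjMatrix_apply, apply_ite]
  have : (Nat.castRingHom ℝ).mapMatrix (Γ.adjMatrix ℕ ^ m) = (Γ.adjMatrix ℝ) ^ m := by
    rw [map_pow, hmap]
  rw [← this]
  simp [RingHom.mapMatrix_apply, Matrix.map_apply]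

lemma adj_pow_nonneg (m : ℕ) (i j : V) : (0:ℝ) ≤ ((Γ.adjMatrix ℝ) ^ m) i j := by
  rw [← adj_cast]; positivity

lemma adj_row_sum {d : ℕ} (hreg : Γ.IsRegularOfDegree d) (m : ℕ) (v : V) :
    ∑ u, ((Γ.adjMatrix ℝ) ^ m) v u = (d:ℝ) ^ m := by
  induction m generalizing v with
  | zero => simp [Matrix.one_apply]
  | succ m ih =>
    rw [pow_succ, pow_succ]
    have hrowA : ∀ w : V, ∑ u, (Γ.adjMatrix ℝ) w u = (d:ℝ) := by
      intro w
      have := Γ.adjMatrix_mulVec_const_apply_of_regular (α := ℝ) (a := 1) hreg (v := w)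
      simpa [Matrix.mulVec, dotProduct] using this
    calc ∑ u, ((Γ.adjMatrix ℝ) ^ m * Γ.adjMatrix ℝ) v u
        = ∑ u, ∑ w, ((Γ.adjMatrix ℝ) ^ m) v w * (Γ.adjMatrix ℝ) w u := by
          simp [Matrix.mul_apply]
      _ = ∑ w, ∑ u, ((Γ.adjMatrix ℝ) ^ m) v w * (Γ.adjMatrix ℝ) w u := Finset.sum_comm
      _ = ∑ w, ((Γ.adjMatrix ℝ) ^ m) v w * ∑ u, (Γ.adjMatrix ℝ) w u := by
          refine Finset.sum_congr rfl fun w _ => (Finset.mul_sum _ _ _).symm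
      _ = ∑ w, ((Γ.adjMatrix ℝ) ^ m) v w * (d:ℝ) := by
          refine Finset.sum_congr rfl fun w _ => by rw [hrowA w]
      _ = (d:ℝ)^m * d := by rw [← Finset.sum_mul, ih]

section spectral

variable {Γ}
variable (hA : (Γ.adjMatrix ℝ).IsHermitian)

lemma spec_decomp :
    Γ.adjMatrix ℝ = (hA.eigenvectorUnitary : Matrix V V ℝ) * Matrix.diagonal hA.eigenvalues
      * star (hA.eigenvectorUnitary : Matrix V V ℝ) := by
  have := hA.spectral_theorem
  rwa [RCLike.ofReal_real_eq_id, Function.id_comp] at this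

lemma unitary_conj_pow (U D A : Matrix V V ℝ) (hUs : star U * U = 1) (hsU : U * star U = 1)
    (hAe : A = U * D * star U) (k : ℕ) : A ^ k = U * D ^ k * star U := by
  induction k with
  | zero => simp [pow_zero, hsU]
  | succ k ihk =>
    rw [pow_succ, ihk, hAe, pow_succ]
    calc U * D ^ k * star U * (U * D * star U)
        = U * D ^ k * (star U * U) * D * star U := by simp only [Matrix.mul_assoc]
      _ = U * (D ^ k * D) * star U := by rw [hUs]; simp only [Matrix.mul_assoc, Matrix.one_mul]

lemma spec_pow (m : ℕ) :
    (Γ.adjMatrix ℝ) ^ m = (hA.eigenvectorUnitary : Matrix V V ℝ)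
      * Matrix.diagonal (fun i => hA.eigenvalues i ^ m)
      * star (hA.eigenvectorUnitary : Matrix V V ℝ) := by
  rw [unitary_conj_pow (hA.eigenvectorUnitary : Matrix V V ℝ) (Matrix.diagonal hA.eigenvalues)
    (Γ.adjMatrix ℝ) (Matrix.mem_unitaryGroup_iff'.mp hA.eigenvectorUnitary.2)
    (Matrix.mem_unitaryGroup_iff.mp hA.eigenvectorUnitary.2) (spec_decomp hA) m,
    Matrix.diagonal_pow]
  rfl

lemma spec_entry (m : ℕ) (v : V) :
    ((Γ.adjMatrix ℝ) ^ m) v v =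
      ∑ i, hA.eigenvalues i ^ m * ((hA.eigenvectorUnitary : Matrix V V ℝ) v i) ^ 2 := by
  rw [spec_pow hA m, Matrix.mul_apply]
  refine Finset.sum_congr rfl fun i _ => ?_
  rw [Matrix.mul_diagonal, Matrix.star_apply, star_trivial]
  ring

lemma spec_col_sq (i₀ : V) :
    ∑ v, ((hA.eigenvectorUnitary : Matrix V V ℝ) v i₀) ^ 2 = 1 := by
  have hUs : star (hA.eigenvectorUnitary : Matrix V V ℝ) * (hA.eigenvectorUnitary : Matrix V V ℝ) = 1 :=
    Matrix.mem_unitaryGroup_iff'.mp hA.eigenvectorUnitary.2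
  have := congrFun (congrFun hUs i₀) i₀
  rw [Matrix.mul_apply, Matrix.one_apply_eq] at this
  rw [← this]
  refine Finset.sum_congr rfl fun v _ => ?_
  rw [Matrix.star_apply, star_trivial]
  ring

end spectral

lemma abs_odd_term (x u : ℝ) (r : ℕ) : |x^(2*r+1) * u^2| = |x| * (x^(2*r) * u^2) := by
  have heven : (0:ℝ) ≤ x^(2*r) := by rw [pow_mul]; positivity
  rw [pow_succ, abs_mul, abs_mul, abs_of_nonneg heven, abs_of_nonneg (sq_nonneg u)]
  ring

lemma per_vertex_bound {Γ : SimpleGraph V} [DecidableRel Γ.Adj]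
    (hA : (Γ.adjMatrix ℝ).IsHermitian) {n d : ℕ} {lam : ℝ}
    (hn : Fintype.card V = n) (hn2 : 2 ≤ n) (hreg : Γ.IsRegularOfDegree d)
    (i₀ : V) (hd : hA.eigenvalues i₀ = d)
    (hb : ∀ i : V, i ≠ i₀ → |hA.eigenvalues i| ≤ lam)
    (r : ℕ) (hr : 1 ≤ r) (v : V) :
    |((Γ.adjMatrix ℝ) ^ (2*r+1)) v v - (d:ℝ)^(2*r+1)/n| ≤ lam * ((Γ.adjMatrix ℝ) ^ (2*r)) v v := by
  obtain ⟨U, hUdef⟩ : ∃ M : Matrix V V ℝ, M = (hA.eigenvectorUnitary : Matrix V V ℝ) := ⟨_, rfl⟩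
  obtain ⟨E, hEdef⟩ : ∃ e : V → ℝ, e = hA.eigenvalues := ⟨_, rfl⟩
  have hUs : star U * U = 1 := by
    rw [hUdef]; exact Matrix.mem_unitaryGroup_iff'.mp hA.eigenvectorUnitary.2
  have hsU : U * star U = 1 := by
    rw [hUdef]; exact Matrix.mem_unitaryGroup_iff.mp hA.eigenvectorUnitary.2
  have hentry : ∀ (m : ℕ) (w : V), ((Γ.adjMatrix ℝ)^m) w w = ∑ i, E i ^ m * (U w i)^2 := by
    intro m w; rw [hUdef, hEdef]; exact spec_entry hA m w
  have hcol : ∑ v1, (U v1 i₀)^2 = 1 := by rw [hUdef]; exact spec_col_sq hA i₀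
  have hAdec : Γ.adjMatrix ℝ = U * Matrix.diagonal E * star U := by
    rw [hUdef, hEdef]; exact spec_decomp hA
  have hd' : E i₀ = (d:ℝ) := by rw [hEdef]; exact hd
  have hb' : ∀ i : V, i ≠ i₀ → |E i| ≤ lam := by intro i hi; rw [hEdef]; exact hb i hi
  have hnpos : (0:ℝ) < n := by positivity
  have hlam0 : 0 ≤ lam := by
    obtain ⟨i1, hi1⟩ := Fintype.exists_ne_of_one_lt_card (by omega : 1 < Fintype.card V) i₀
    exact le_trans (abs_nonneg _) (hb' i1 hi1)
  have hterm_nonneg : ∀ i, 0 ≤ E i ^ (2*r) * (U v i)^2 := fun i =>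
    mul_nonneg (by rw [pow_mul]; positivity) (sq_nonneg _)
  -- Cauchy–Schwarz lower bound on the even diagonal entry
  have hCS : (d:ℝ)^(2*r)/n ≤ ((Γ.adjMatrix ℝ)^(2*r)) v v := by
    have hsym : ∀ u : V, ((Γ.adjMatrix ℝ)^r) u v = ((Γ.adjMatrix ℝ)^r) v u := by
      intro u
      have h := (hA.pow r).apply v u
      rwa [star_trivial] at h
    have hmul : ((Γ.adjMatrix ℝ)^(2*r)) v v = ∑ u, (((Γ.adjMatrix ℝ)^r) v u)^2 := by
      rw [show 2*r = r + r by ring, pow_add, Matrix.mul_apply]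
      refine Finset.sum_congr rfl fun u _ => ?_
      rw [hsym u]; ring
    have hrow := adj_row_sum Γ hreg r v
    have hsq := sq_sum_le_card_mul_sum_sq (s := (univ : Finset V))
      (f := fun u => ((Γ.adjMatrix ℝ)^r) v u)
    rw [hrow, Finset.card_univ, hn] at hsq
    rw [hmul, div_le_iff₀ hnpos]
    calc (d:ℝ)^(2*r) = ((d:ℝ)^r)^2 := by rw [← pow_mul]; ring_nf
      _ ≤ n * ∑ u, (((Γ.adjMatrix ℝ)^r) v u)^2 := hsq
      _ = (∑ u, (((Γ.adjMatrix ℝ)^r) v u)^2) * n := by ring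
  rcases lt_or_ge lam (d:ℝ) with hcase | hcase
  · -- lam < d : the top eigenvector is constant
    have hAone : Γ.adjMatrix ℝ *ᵥ (Function.const V (1:ℝ)) = Function.const V (d:ℝ) := by
      funext w
      rw [Γ.adjMatrix_mulVec_const_apply_of_regular hreg]
      simp
    obtain ⟨w, hwdef⟩ : ∃ x : V → ℝ, x = star U *ᵥ (Function.const V (1:ℝ)) := ⟨_, rfl⟩
    have hDw : Matrix.diagonal E *ᵥ w = (d:ℝ) • w := by
      have h1 : star U * (U * Matrix.diagonal E * star U) = Matrix.diagonal E * star U := by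
        calc star U * (U * Matrix.diagonal E * star U)
            = (star U * U) * (Matrix.diagonal E * star U) := by simp only [Matrix.mul_assoc]
          _ = Matrix.diagonal E * star U := by rw [hUs, Matrix.one_mul]
      calc Matrix.diagonal E *ᵥ w
          = (Matrix.diagonal E * star U) *ᵥ (Function.const V (1:ℝ)) := by
            rw [hwdef, Matrix.mulVec_mulVec]
        _ = (star U * (U * Matrix.diagonal E * star U)) *ᵥ (Function.const V (1:ℝ)) := by
            rw [h1]
        _ = star U *ᵥ ((U * Matrix.diagonal E * star U) *ᵥ (Function.const V (1:ℝ))) := by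
            rw [Matrix.mulVec_mulVec]
        _ = star U *ᵥ (Γ.adjMatrix ℝ *ᵥ (Function.const V (1:ℝ))) := by rw [← hAdec]
        _ = star U *ᵥ (Function.const V (d:ℝ)) := by rw [hAone]
        _ = star U *ᵥ ((d:ℝ) • (Function.const V (1:ℝ))) := by
            have hconst : Function.const V (d:ℝ) = (d:ℝ) • (Function.const V (1:ℝ)) := by
              funext x; simp [Function.const]
            rw [hconst]
        _ = (d:ℝ) • w := by rw [Matrix.mulVec_smul, hwdef]
    have hw0 : ∀ i : V, i ≠ i₀ → w i = 0 := by
      intro i hi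
      have h2 := congrFun hDw i
      rw [Matrix.mulVec_diagonal] at h2
      simp only [Pi.smul_apply, smul_eq_mul] at h2
      by_contra hwi
      have hEi : E i = (d:ℝ) := mul_right_cancel₀ hwi h2
      have habs := hb' i hi
      rw [hEi, abs_of_nonneg (by positivity)] at habs
      linarith
    have hUw : ∀ v1 : V, U v1 i₀ * w i₀ = 1 := by
      intro v1
      have h3 : U *ᵥ w = Function.const V (1:ℝ) := by
        rw [hwdef, Matrix.mulVec_mulVec, hsU, Matrix.one_mulVec]
      have h4 := congrFun h3 v1
      simp only [Matrix.mulVec, dotProduct, Function.const] at h4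
      have h5 : ∑ i, U v1 i * w i = U v1 i₀ * w i₀ :=
        Finset.sum_eq_single i₀ (fun i _ hi => by rw [hw0 i hi, mul_zero])
          (fun h => absurd (mem_univ i₀) h)
      rw [← h5]
      exact h4
    have hwn : w i₀ ^ 2 = (n:ℝ) := by
      have h6 : ∀ v1 : V, (U v1 i₀)^2 * (w i₀)^2 = 1 := fun v1 => by
        rw [← mul_pow, hUw v1, one_pow]
      have h7 : ∑ v1, (U v1 i₀)^2 * (w i₀)^2 = (n:ℝ) := by
        rw [Finset.sum_congr rfl (fun v1 _ => h6 v1), Finset.sum_const, Finset.card_univ, hn]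
        simp
      rwa [← Finset.sum_mul, hcol, one_mul] at h7
    have hU2 : (U v i₀)^2 = 1/(n:ℝ) := by
      have h8 : (U v i₀)^2 * (w i₀)^2 = 1 := by rw [← mul_pow, hUw v, one_pow]
      rw [hwn] at h8
      field_simp
      linarith
    have hsplit : ((Γ.adjMatrix ℝ)^(2*r+1)) v v - (d:ℝ)^(2*r+1)/n
        = ∑ i ∈ univ.erase i₀, E i ^ (2*r+1) * (U v i)^2 := by
      rw [hentry (2*r+1) v, ← Finset.add_sum_erase univ _ (mem_univ i₀), hd', hU2]
      ring
    rw [hsplit]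
    calc |∑ i ∈ univ.erase i₀, E i ^ (2*r+1) * (U v i)^2|
        ≤ ∑ i ∈ univ.erase i₀, |E i ^ (2*r+1) * (U v i)^2| := Finset.abs_sum_le_sum_abs _ _
      _ ≤ ∑ i ∈ univ.erase i₀, lam * (E i ^ (2*r) * (U v i)^2) := by
          refine Finset.sum_le_sum fun i hi => ?_
          rw [abs_odd_term]
          exact mul_le_mul_of_nonneg_right (hb' i (Finset.ne_of_mem_erase hi)) (hterm_nonneg i)
      _ = lam * ∑ i ∈ univ.erase i₀, E i ^ (2*r) * (U v i)^2 := (Finset.mul_sum _ _ _).symm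
      _ ≤ lam * ∑ i, E i ^ (2*r) * (U v i)^2 := by
          refine mul_le_mul_of_nonneg_left ?_ hlam0
          exact Finset.sum_le_sum_of_subset_of_nonneg (Finset.erase_subset _ _)
            (fun i _ _ => hterm_nonneg i)
      _ = lam * ((Γ.adjMatrix ℝ)^(2*r)) v v := by rw [← hentry]
  · -- d ≤ lam
    have habs : ∀ i : V, |E i| ≤ lam := by
      intro i
      rcases eq_or_ne i i₀ with rfl | hi
      · rw [hd', abs_of_nonneg (by positivity)]; exact hcase
      · exact hb' i hi
    have hb0 : 0 ≤ ((Γ.adjMatrix ℝ)^(2*r+1)) v v := adj_pow_nonneg Γ _ v v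
    have hble : ((Γ.adjMatrix ℝ)^(2*r+1)) v v ≤ lam * ((Γ.adjMatrix ℝ)^(2*r)) v v := by
      rw [hentry (2*r+1) v, hentry (2*r) v, Finset.mul_sum]
      refine Finset.sum_le_sum fun i _ => ?_
      calc E i ^ (2*r+1) * (U v i)^2 ≤ |E i ^ (2*r+1) * (U v i)^2| := le_abs_self _
        _ = |E i| * (E i ^ (2*r) * (U v i)^2) := abs_odd_term _ _ _
        _ ≤ lam * (E i ^ (2*r) * (U v i)^2) :=
            mul_le_mul_of_nonneg_right (habs i) (hterm_nonneg i)
    have hβ1 : 0 ≤ (d:ℝ)^(2*r+1)/n := by positivity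
    have hβ2 : (d:ℝ)^(2*r+1)/n ≤ lam * ((Γ.adjMatrix ℝ)^(2*r)) v v := by
      have heq : (d:ℝ)^(2*r+1)/n = (d:ℝ) * ((d:ℝ)^(2*r)/n) := by rw [pow_succ]; ring
      rw [heq]
      have hd0 : (0:ℝ) ≤ d := by positivity
      exact mul_le_mul hcase hCS (by positivity) (le_trans hd0 hcase)
    rw [abs_sub_le_iff]
    constructor
    · linarith
    · linarith

end specpart

/-- The intermediate estimate in the proof of Lemma 2.3: homomorphism count of `C_{2q}` and
`C_{2r+1}` glued at a vertex, compared with `(d^{2r+1}/n)·h_{C_{2q}}(Γ)`. -/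
theorem glued_cycles_hom_estimate (V : Type) [Fintype V] [DecidableEq V]
    (Γ : SimpleGraph V) [DecidableRel Γ.Adj] (n d : ℕ) (lam : ℝ)
    (hn : Fintype.card V = n) (hΓ : IsNDLGraph Γ d lam) (q r : ℕ) (hq : 1 ≤ q) (hr : 1 ≤ r) :
    |(homCount (gluedCycles q r) Γ : ℝ) -
        (d : ℝ) ^ (2 * r + 1) / n * (homCount (cycleGraph (2 * q)) Γ : ℝ)| ≤
      lam * (homCount (cycleGraph (2 * (q + r))) Γ : ℝ) := by
  obtain ⟨hreg, hA, i₀, hd, hb⟩ := hΓ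
  have hglued : (homCount (gluedCycles q r) Γ : ℝ)
      = ∑ v, ((Γ.adjMatrix ℝ)^(2*q)) v v * ((Γ.adjMatrix ℝ)^(2*r+1)) v v := by
    rw [homCount, homCount_glued_eq Γ hq hr, card_pseq Γ hq hr]
    push_cast
    refine Finset.sum_congr rfl fun v _ => ?_
    rw [card_wseq, card_wseq, adj_cast, adj_cast]
  have hcyc : ∀ m : ℕ, 2 ≤ m → (homCount (cycleGraph m) Γ : ℝ)
      = ∑ v, ((Γ.adjMatrix ℝ)^m) v v := by
    intro m hm
    obtain ⟨k, rfl⟩ : ∃ k, m = k + 2 := ⟨m - 2, by omega⟩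
    rw [homCount, homCount_cycle_eq, card_cseq]
    push_cast
    exact Finset.sum_congr rfl fun v _ => by rw [card_wseq, adj_cast]
  rw [hglued, hcyc (2*q) (by omega), hcyc (2*(q+r)) (by omega),
    show 2*(q+r) = 2*q+2*r by ring]
  rcases le_or_gt n 1 with hsmall | hn2
  · -- degenerate case: at most one vertex, no edges
    have hsub : Fintype.card V ≤ 1 := by omega
    haveI : Subsingleton V := Fintype.card_le_one_iff_subsingleton.mp hsub
    have hnoadj : ∀ x y : V, ¬ Γ.Adj x y := fun x y hxy =>
      Γ.ne_of_adj hxy (Subsingleton.elim x y)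
    have hA0 : Γ.adjMatrix ℝ = 0 := by
      ext a b; simp [SimpleGraph.adjMatrix_apply, hnoadj a b]
    rw [hA0, zero_pow (by omega : 2*q ≠ 0), zero_pow (by omega : 2*r+1 ≠ 0),
      zero_pow (by omega : 2*q+2*r ≠ 0)]
    simp
  · -- main case
    have hlam0 : 0 ≤ lam := by
      obtain ⟨i1, hi1⟩ := Fintype.exists_ne_of_one_lt_card (by omega : 1 < Fintype.card V) i₀
      exact le_trans (abs_nonneg _) (hb i1 hi1)
    have hpv : ∀ v : V, |((Γ.adjMatrix ℝ)^(2*r+1)) v v - (d:ℝ)^(2*r+1)/n|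
        ≤ lam * ((Γ.adjMatrix ℝ)^(2*r)) v v :=
      fun v => per_vertex_bound hA hn (by omega) hreg i₀ hd hb r hr v
    have ha : ∀ v : V, 0 ≤ ((Γ.adjMatrix ℝ)^(2*q)) v v := fun v => adj_pow_nonneg Γ _ v v
    have hprod : ∀ v : V, ((Γ.adjMatrix ℝ)^(2*q)) v v * ((Γ.adjMatrix ℝ)^(2*r)) v v
        ≤ ((Γ.adjMatrix ℝ)^(2*q+2*r)) v v := by
      intro v
      rw [pow_add, Matrix.mul_apply]
      exact Finset.single_le_sum
        (f := fun w => ((Γ.adjMatrix ℝ)^(2*q)) v w * ((Γ.adjMatrix ℝ)^(2*r)) w v)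
        (fun w _ => mul_nonneg (adj_pow_nonneg Γ _ v w) (adj_pow_nonneg Γ _ w v)) (mem_univ v)
    have hrw : ∑ v, ((Γ.adjMatrix ℝ)^(2*q)) v v * (((Γ.adjMatrix ℝ)^(2*r+1)) v v - (d:ℝ)^(2*r+1)/n)
        = ∑ v, ((Γ.adjMatrix ℝ)^(2*q)) v v * ((Γ.adjMatrix ℝ)^(2*r+1)) v v
          - (d:ℝ)^(2*r+1)/n * ∑ v, ((Γ.adjMatrix ℝ)^(2*q)) v v := by
      rw [Finset.mul_sum]
      rw [← Finset.sum_sub_distrib]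
      refine Finset.sum_congr rfl fun v _ => by ring
    rw [← hrw]
    calc |∑ v, ((Γ.adjMatrix ℝ)^(2*q)) v v * (((Γ.adjMatrix ℝ)^(2*r+1)) v v - (d:ℝ)^(2*r+1)/n)|
        ≤ ∑ v, |((Γ.adjMatrix ℝ)^(2*q)) v v * (((Γ.adjMatrix ℝ)^(2*r+1)) v v - (d:ℝ)^(2*r+1)/n)| :=
          Finset.abs_sum_le_sum_abs _ _
      _ = ∑ v, ((Γ.adjMatrix ℝ)^(2*q)) v v * |((Γ.adjMatrix ℝ)^(2*r+1)) v v - (d:ℝ)^(2*r+1)/n| := by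
          refine Finset.sum_congr rfl fun v _ => ?_
          rw [abs_mul, abs_of_nonneg (ha v)]
      _ ≤ ∑ v, ((Γ.adjMatrix ℝ)^(2*q)) v v * (lam * ((Γ.adjMatrix ℝ)^(2*r)) v v) :=
          Finset.sum_le_sum fun v _ => mul_le_mul_of_nonneg_left (hpv v) (ha v)
      _ = lam * ∑ v, ((Γ.adjMatrix ℝ)^(2*q)) v v * ((Γ.adjMatrix ℝ)^(2*r)) v v := by
          rw [Finset.mul_sum]
          exact Finset.sum_congr rfl fun v _ => by ring
      _ ≤ lam * ∑ v, ((Γ.adjMatrix ℝ)^(2*q+2*r)) v v :=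
          mul_le_mul_of_nonneg_left (Finset.sum_le_sum fun v _ => hprod v) hlam0
end

section
/- Let X be a finite nonempty set, let H be a graph with e(H) edges, let γ : X² → {0,1} be symmetric, and let g : X² → ℝ be symmetric with 0 ≤ g ≤ γ pointwise. Set f := 2g − γ. Then t_H(g) + t_H(γ − g) = (1/2)^{e(H)−1} · ( t_H(γ) + Σ_{J ∈ E₊(H)} E[⟨f,γ⟩_H^J] ). -/
open Finset SimpleGraph

/-- For a symmetric function `f : X → X → ℝ` and a vertex map `x`, the induced well-defined
weight of an unordered pair (edge) of vertices. -/
noncomputable def symEdgeWeight {X : Type} {m : ℕ} (f : X → X → ℝ)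
    (hf : ∀ a b, f a b = f b a) (x : Fin m → X) : Sym2 (Fin m) → ℝ :=
  Sym2.lift ⟨fun a b => f (x a) (x b), fun a b => hf (x a) (x b)⟩

/-- `t_H(f)`: the homomorphism density of the graph `H` (on vertex set `Fin m`) in the
symmetric weight function `f : X → X → ℝ`, i.e. `E[∏_{ij ∈ E(H)} f(x_i, x_j)]` for independent
uniform random vertices `x₁, …, x_m ∈ X`. -/
noncomputable def homDensity {X : Type} [Fintype X] {m : ℕ} (H : SimpleGraph (Fin m))
    [DecidableRel H.Adj] (f : X → X → ℝ) (hf : ∀ a b, f a b = f b a) : ℝ :=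
  (∑ x : Fin m → X, ∏ e ∈ H.edgeFinset, symEdgeWeight f hf x e) / (Fintype.card X : ℝ) ^ m

/-- `E[⟨f₁,f₂⟩_H^J]`: the expectation of `∏_{ij ∈ J} f₁(x_i,x_j) · ∏_{ij ∈ E(H)∖J} f₂(x_i,x_j)`
over independent uniform random vertices `x₁, …, x_m ∈ X`. -/
noncomputable def mixedMoment {X : Type} [Fintype X] {m : ℕ} (H : SimpleGraph (Fin m))
    [DecidableRel H.Adj] (J : Finset (Sym2 (Fin m))) (f₁ f₂ : X → X → ℝ)
    (h₁ : ∀ a b, f₁ a b = f₁ b a) (h₂ : ∀ a b, f₂ a b = f₂ b a) : ℝ :=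
  (∑ x : Fin m → X, (∏ e ∈ J, symEdgeWeight f₁ h₁ x e) *
      ∏ e ∈ H.edgeFinset \ J, symEdgeWeight f₂ h₂ x e) / (Fintype.card X : ℝ) ^ m


lemma symEdgeWeight_eval {X : Type} {m : ℕ} (f : X → X → ℝ)
    (hf : ∀ a b, f a b = f b a) (x : Fin m → X) (a b : Fin m) :
    Sym2.lift ⟨fun a b => f (x a) (x b), fun a b => hf (x a) (x b)⟩ (s(a,b)) = f (x a) (x b) := rfl

lemma key_identity {α : Type*} [DecidableEq α] (E : Finset α) (G Γ : α → ℝ) :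
    (∏ e ∈ E, G e) + ∏ e ∈ E, (Γ e - G e) =
      ((1:ℝ)/2) ^ ((E.card : ℤ) - 1) *
        ((∏ e ∈ E, Γ e) +
          ∑ J ∈ E.powerset.filter (fun J => Even J.card ∧ J.Nonempty),
            (∏ e ∈ J, (2 * G e - Γ e)) * ∏ e ∈ E \ J, Γ e) := by
  set F : α → ℝ := fun e => 2 * G e - Γ e with hF
  have h2 : ((1:ℝ)/2) ^ ((E.card : ℤ) - 1) = 2 * ((1:ℝ)/2) ^ E.card := by
    rw [zpow_sub₀ (by norm_num : (1:ℝ)/2 ≠ 0), zpow_natCast, zpow_one]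
    ring
  have e1 : ∏ e ∈ E, G e
      = ((1:ℝ)/2) ^ E.card * ∑ J ∈ E.powerset, (∏ e ∈ J, F e) * ∏ e ∈ E \ J, Γ e := by
    rw [← Finset.prod_add]
    have : ∀ e ∈ E, G e = (1/2 : ℝ) * (F e + Γ e) := by
      intro e _; simp only [hF]; ring
    rw [Finset.prod_congr rfl this, Finset.prod_mul_distrib, Finset.prod_const]
  have e2 : ∏ e ∈ E, (Γ e - G e)
      = ((1:ℝ)/2) ^ E.card * ∑ J ∈ E.powerset,
          ((-1:ℝ) ^ J.card * ∏ e ∈ J, F e) * ∏ e ∈ E \ J, Γ e := by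
    have : ∀ e ∈ E, Γ e - G e = (1/2 : ℝ) * ((-F) e + Γ e) := by
      intro e _; simp only [hF, Pi.neg_apply]; ring
    rw [Finset.prod_congr rfl this, Finset.prod_mul_distrib, Finset.prod_const,
      Finset.prod_add]
    congr 1
    refine Finset.sum_congr rfl fun J _ => ?_
    congr 1
    have : ∀ x ∈ J, (-F) x = (-1:ℝ) * F x := fun x _ => by simp
    rw [Finset.prod_congr rfl this, Finset.prod_mul_distrib, Finset.prod_const]
  rw [e1, e2, ← mul_add, ← Finset.sum_add_distrib, h2]
  have hsum : True := trivial
  have step : ∀ J ∈ E.powerset,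
      ((∏ e ∈ J, F e) * ∏ e ∈ E \ J, Γ e
        + ((-1:ℝ) ^ J.card * ∏ e ∈ J, F e) * ∏ e ∈ E \ J, Γ e)
      = if Even J.card then 2 * ((∏ e ∈ J, F e) * ∏ e ∈ E \ J, Γ e) else 0 := by
    intro J _
    by_cases h : Even J.card
    · rw [if_pos h, h.neg_one_pow]; ring
    · rw [if_neg h, (Nat.not_even_iff_odd.mp h).neg_one_pow]; ring
  have key : ∑ J ∈ E.powerset,
      ((∏ e ∈ J, F e) * ∏ e ∈ E \ J, Γ e
        + ((-1:ℝ) ^ J.card * ∏ e ∈ J, F e) * ∏ e ∈ E \ J, Γ e)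
      = 2 * ((∏ e ∈ E, Γ e) +
          ∑ J ∈ E.powerset.filter (fun J => Even J.card ∧ J.Nonempty),
            (∏ e ∈ J, F e) * ∏ e ∈ E \ J, Γ e) := by
    rw [Finset.sum_congr rfl step, ← Finset.sum_filter, ← Finset.mul_sum]
    congr 1
    have hmem : (∅ : Finset α) ∈ E.powerset.filter (fun J => Even J.card) := by simp
    rw [← Finset.add_sum_erase _ _ hmem]
    congr 1
    · simp
    · apply Finset.sum_congr _ fun _ _ => rfl
      ext J
      simp [Finset.nonempty_iff_ne_empty, and_comm, and_assoc]
  rw [key]; ring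

/-- Identity (3.1): for `f = 2g - γ` with `0 ≤ g ≤ γ` and `γ` a symmetric `{0,1}`-valued
function, `t_H(g) + t_H(γ - g) = (1/2)^{e(H)-1} (t_H(γ) + Σ_{J ∈ E₊(H)} E[⟨f,γ⟩_H^J])`. -/
theorem density_cancellation_identity (X : Type) [Fintype X] [Nonempty X]
    (m : ℕ) (H : SimpleGraph (Fin m)) [DecidableRel H.Adj] (γ g : X → X → ℝ)
    (hγs : ∀ a b, γ a b = γ b a) (hγ01 : ∀ a b, γ a b = 0 ∨ γ a b = 1)
    (hgs : ∀ a b, g a b = g b a) (hg0 : ∀ a b, 0 ≤ g a b) (hgγ : ∀ a b, g a b ≤ γ a b) :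
    homDensity H g hgs +
        homDensity H (fun a b => γ a b - g a b) (fun a b => by simp only [hγs a b, hgs a b]) =
      ((1 : ℝ) / 2) ^ ((H.edgeFinset.card : ℤ) - 1) *
        (homDensity H γ hγs +
          ∑ J ∈ H.edgeFinset.powerset.filter (fun J => Even J.card ∧ J.Nonempty),
            mixedMoment H J (fun a b => 2 * g a b - γ a b) γ
              (fun a b => by simp only [hγs a b, hgs a b]) hγs) := by
  classical
  unfold homDensity mixedMoment
  rw [← add_div, ← Finset.sum_add_distrib, ← Finset.sum_div, ← add_div,
    ← mul_div_assoc]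
  congr 1
  rw [Finset.sum_comm, ← Finset.sum_add_distrib, Finset.mul_sum]
  refine Finset.sum_congr rfl fun x _ => ?_
  have hsub : ∀ e ∈ H.edgeFinset,
      symEdgeWeight (fun a b => γ a b - g a b)
        (fun a b => by simp only [hγs a b, hgs a b]) x e
      = symEdgeWeight γ hγs x e - symEdgeWeight g hgs x e := by
    intro e _
    induction e using Sym2.ind with
    | _ a b => rfl
  have hcomb : ∀ (J : Finset (Sym2 (Fin m))), ∀ e ∈ J,
      symEdgeWeight (fun a b => 2 * g a b - γ a b)
        (fun a b => by simp only [hγs a b, hgs a b]) x e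
      = 2 * symEdgeWeight g hgs x e - symEdgeWeight γ hγs x e := by
    intro J e _
    induction e using Sym2.ind with
    | _ a b => rfl
  rw [Finset.prod_congr rfl hsub]
  have := key_identity H.edgeFinset (symEdgeWeight g hgs x) (symEdgeWeight γ hγs x)
  rw [this]
  congr 2
  exact Finset.sum_congr rfl fun J _ => by rw [Finset.prod_congr rfl (hcomb J)]
end

section
/- Let X be a finite nonempty set, let γ : X² → {0,1} be symmetric, let f : X² → ℝ be symmetric with |f(x,y)| ≤ γ(x,y) for all x, y ∈ X, let k ≥ 1 be an integer, let p > 0, and let 0 < z ≤ 1. Define T₀ = T₁ = 0 and, for 2 ≤ m ≤ 2k, T_m := (pz)^{2k−m} · Σ_J E[⟨f, zγ⟩_{P_m}^J], where P_m is the path with vertices 1,…,m+1 and edges {i,i+1}, and the sum runs over all J ⊆ E(P_m) with |J| even that contain both the edge {1,2} and the edge {m,m+1}. Then Σ_{i=1}^{2k} (2k+1−i)·T_i ≥ 0. -/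
open Finset

/-- `E[⟨f₁,f₂⟩_{P_m}^J]` for the path `P_m` with vertices `1,…,m+1` and edges `{i,i+1}`:
the expectation, over independent uniform random `x : Fin (m+1) → X`, of the product of
`f₁` over the edges indexed by `J` and of `f₂` over the remaining edges. -/
noncomputable def pathMoment {X : Type} [Fintype X] (m : ℕ) (J : Finset (Fin m))
    (f₁ f₂ : X → X → ℝ) : ℝ :=
  (∑ x : Fin (m + 1) → X, ∏ i : Fin m,
      (if i ∈ J then f₁ (x i.castSucc) (x i.succ) else f₂ (x i.castSucc) (x i.succ))) /
    (Fintype.card X : ℝ) ^ (m + 1)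

section Aux

open Matrix

variable {X : Type} [Fintype X] [DecidableEq X]

/-- Ordered product of a tuple of matrices. -/
noncomputable def Mprod : (m : ℕ) → (Fin m → Matrix X X ℝ) → Matrix X X ℝ
  | 0, _ => 1
  | (m+1), A => A 0 * Mprod m (fun i => A i.succ)

@[simp] lemma Mprod_zero (A : Fin 0 → Matrix X X ℝ) : Mprod 0 A = 1 := rfl

lemma Mprod_succ (m : ℕ) (A : Fin (m+1) → Matrix X X ℝ) :
    Mprod (m+1) A = A 0 * Mprod m (fun i => A i.succ) := rfl

lemma Mprod_const : ∀ (m : ℕ) (B : Matrix X X ℝ), Mprod m (fun _ => B) = B ^ m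
  | 0, B => by simp
  | (m+1), B => by rw [Mprod_succ, Mprod_const m B, pow_succ']

lemma Mprod_snoc : ∀ (m : ℕ) (A : Fin (m+1) → Matrix X X ℝ),
    Mprod (m+1) A = Mprod m (fun i => A i.castSucc) * A (Fin.last m)
  | 0, A => by simp [Mprod_succ]
  | (m+1), A => by
      rw [Mprod_succ (m+1) A, Mprod_snoc m (fun i => A i.succ),
        Mprod_succ m (fun i => A i.castSucc)]
      simp only [Fin.succ_castSucc, Fin.succ_last, Fin.castSucc_zero, mul_assoc]

/-- The sum over all random walks of a product of matrix entries, with an initial weight `u`. -/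
lemma walk_eq : ∀ (m : ℕ) (A : Fin m → Matrix X X ℝ) (u : X → ℝ),
    ∑ x : Fin (m+1) → X, u (x 0) * ∏ i : Fin m, A i (x i.castSucc) (x i.succ)
      = ∑ b, (u ᵥ* Mprod m A) b := by
  intro m
  induction m with
  | zero =>
    intro A u
    have h0 : (∑ x : Fin 1 → X, u (x 0) * ∏ i : Fin 0, A i (x i.castSucc) (x i.succ))
        = ∑ a : X, u a :=
      Fintype.sum_equiv (Equiv.funUnique (Fin 1) X) _ _ (fun x => by simp)
    rw [h0]
    simp
  | succ m ih =>
    intro A u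
    rw [show (∑ x : Fin (m+2) → X, u (x 0) * ∏ i : Fin (m+1), A i (x i.castSucc) (x i.succ))
        = ∑ p : X × (Fin (m+1) → X),
            u ((Fin.consEquiv (fun _ => X)) p 0) *
              ∏ i : Fin (m+1), A i ((Fin.consEquiv (fun _ => X)) p i.castSucc)
                ((Fin.consEquiv (fun _ => X)) p i.succ) from
      (Fintype.sum_equiv (Fin.consEquiv (fun _ => X)) _ _ (fun p => rfl)).symm]
    rw [Fintype.sum_prod_type]
    have key : ∀ (a : X) (y : Fin (m+1) → X),
        u ((Fin.consEquiv (fun _ => X)) (a, y) 0) *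
          ∏ i : Fin (m+1), A i ((Fin.consEquiv (fun _ => X)) (a, y) i.castSucc)
            ((Fin.consEquiv (fun _ => X)) (a, y) i.succ)
        = u a * (A 0 a (y 0) *
            ∏ i : Fin m, A i.succ (y i.castSucc) (y i.succ)) := by
      intro a y
      have : ((Fin.consEquiv (fun _ => X)) (a, y) : Fin (m+2) → X) = Fin.cons a y := rfl
      rw [this, Fin.prod_univ_succ]
      simp only [Fin.cons_zero, Fin.castSucc_zero, ← Fin.succ_castSucc, Fin.cons_succ]
    simp only [key]
    rw [Mprod_succ, ← Matrix.vecMul_vecMul, ← ih (fun i => A i.succ) (u ᵥ* A 0)]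
    rw [Finset.sum_comm]
    refine Finset.sum_congr rfl fun y _ => ?_
    simp only [Matrix.vecMul, dotProduct, Finset.sum_mul, mul_assoc]

/-- The general weighted binomial-type expansion for ordered matrix products. -/
lemma genSum : ∀ (n : ℕ) (F G : Fin n → Matrix X X ℝ) (w : Fin n → Bool → ℝ),
    ∑ g : Fin n → Bool,
        (∏ i, w i (g i)) • Mprod n (fun i => if g i then F i else G i)
      = Mprod n (fun i => w i true • F i + w i false • G i) := by
  intro n
  induction n with
  | zero => intro F G w; simp
  | succ n ih =>
    intro F G w
    rw [show (∑ g : Fin (n+1) → Bool,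
          (∏ i, w i (g i)) • Mprod (n+1) (fun i => if g i then F i else G i))
        = ∑ p : Bool × (Fin n → Bool),
            (∏ i, w i ((Fin.consEquiv (fun _ => Bool)) p i)) •
              Mprod (n+1) (fun i => if (Fin.consEquiv (fun _ => Bool)) p i then F i else G i) from
      (Fintype.sum_equiv (Fin.consEquiv (fun _ => Bool)) _ _ (fun p => rfl)).symm]
    rw [Fintype.sum_prod_type]
    have key : ∀ (b : Bool) (h : Fin n → Bool),
        (∏ i, w i ((Fin.consEquiv (fun _ => Bool)) (b, h) i)) •
            Mprod (n+1) (fun i => if (Fin.consEquiv (fun _ => Bool)) (b, h) i then F i else G i)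
        = (w 0 b • (if b then F 0 else G 0)) *
            ((∏ i, w i.succ (h i)) •
              Mprod n (fun i => if h i then F i.succ else G i.succ)) := by
      intro b h
      have hc : ((Fin.consEquiv (fun _ => Bool)) (b, h) : Fin (n+1) → Bool) = Fin.cons b h := rfl
      rw [hc, Fin.prod_univ_succ, Mprod_succ]
      simp only [Fin.cons_zero, Fin.cons_succ]
      rw [smul_mul_assoc, mul_smul_comm, smul_smul]
    simp only [key]
    rw [Fintype.sum_bool, ← Finset.mul_sum, ← Finset.mul_sum, ih, Mprod_succ]
    rw [← add_mul]
    norm_num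

lemma Mprod_ends (n : ℕ) (B C : Matrix X X ℝ) :
    Mprod (n+2) (fun i : Fin (n+2) => if i = 0 ∨ i = Fin.last (n+1) then B else C)
      = B * (C ^ n * B) := by
  rw [Mprod_succ]
  have h1 : (fun i : Fin (n+1) =>
      if (i.succ : Fin (n+2)) = 0 ∨ (i.succ : Fin (n+2)) = Fin.last (n+1) then B else C)
      = (fun i : Fin (n+1) => if i = Fin.last n then B else C) := by
    funext i
    have hiff : ((i.succ : Fin (n+2)) = 0 ∨ (i.succ : Fin (n+2)) = Fin.last (n+1))
        ↔ (i = Fin.last n) := by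
      constructor
      · rintro (h | h)
        · exact absurd h (Fin.succ_ne_zero i)
        · rwa [← Fin.succ_last, Fin.succ_inj] at h
      · rintro rfl
        right
        exact Fin.succ_last n
    rw [if_congr hiff rfl rfl]
  simp only [h1]
  rw [Mprod_snoc]
  have h2 : (fun i : Fin n =>
      if (i.castSucc : Fin (n+1)) = Fin.last n then B else C) = (fun _ : Fin n => C) := by
    funext i
    simp [(Fin.castSucc_lt_last i).ne]
  simp only [h2, Mprod_const]
  simp

/-- Characteristic-function equivalence between boolean tuples and finsets. -/
def boolEquiv (m : ℕ) : (Fin m → Bool) ≃ Finset (Fin m) where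
  toFun g := univ.filter (fun i => g i = true)
  invFun J := fun i => decide (i ∈ J)
  left_inv g := by funext i; simp
  right_inv J := by ext i; simp

lemma endsSum (n : ℕ) (σ : ℝ) (F G : Matrix X X ℝ) :
    ∑ J : Finset (Fin (n+2)),
        (if (0 : Fin (n+2)) ∈ J ∧ Fin.last (n+1) ∈ J then σ ^ J.card else 0) •
          Mprod (n+2) (fun i => if i ∈ J then F else G)
      = (σ • F) * ((σ • F + G) ^ n * (σ • F)) := by
  classical
  rw [← Fintype.sum_equiv (boolEquiv (n+2))
      (fun g => (if (0 : Fin (n+2)) ∈ boolEquiv (n+2) g ∧ Fin.last (n+1) ∈ boolEquiv (n+2) g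
          then σ ^ (boolEquiv (n+2) g).card else 0) •
        Mprod (n+2) (fun i => if i ∈ boolEquiv (n+2) g then F else G))
      _ (fun g => rfl)]
  set w : Fin (n+2) → Bool → ℝ :=
    fun i b => if b then σ else if i = 0 ∨ i = Fin.last (n+1) then 0 else 1 with hw
  have hterm : ∀ g : Fin (n+2) → Bool,
      (if (0 : Fin (n+2)) ∈ boolEquiv (n+2) g ∧ Fin.last (n+1) ∈ boolEquiv (n+2) g
          then σ ^ (boolEquiv (n+2) g).card else 0) •
        Mprod (n+2) (fun i => if i ∈ boolEquiv (n+2) g then F else G)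
      = (∏ i, w i (g i)) • Mprod (n+2) (fun i => if g i then F else G) := by
    intro g
    have hMf : (fun i => if i ∈ boolEquiv (n+2) g then F else G)
        = (fun i => if g i then F else G) := by
      funext i; simp [boolEquiv]
    rw [hMf]
    by_cases h0 : g 0 = true
    · by_cases hl : g (Fin.last (n+1)) = true
      · have hcoef : (∏ i, w i (g i)) = σ ^ (boolEquiv (n+2) g).card := by
          have hwi : ∀ i, w i (g i) = if g i then σ else 1 := by
            intro i
            by_cases hgi : g i = true
            · simp [hw, hgi]
            · have hi0 : i ≠ 0 := by rintro rfl; exact hgi h0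
              have hil : i ≠ Fin.last (n+1) := by rintro rfl; exact hgi hl
              simp [hw, hgi, hi0, hil]
          rw [Finset.prod_congr rfl (fun i _ => hwi i), Finset.prod_ite]
          simp [boolEquiv]
        rw [if_pos ⟨by simp [boolEquiv, h0], by simp [boolEquiv, hl]⟩, hcoef]
      · rw [if_neg (by simp [boolEquiv, hl])]
        have hz : (∏ i, w i (g i)) = 0 := by
          apply Finset.prod_eq_zero (Finset.mem_univ (Fin.last (n+1)))
          have : g (Fin.last (n+1)) = false := by simpa using hl
          simp [hw, this]
        rw [hz]
    · rw [if_neg (by simp [boolEquiv, h0])]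
      have hz : (∏ i, w i (g i)) = 0 := by
        apply Finset.prod_eq_zero (Finset.mem_univ 0)
        have : g 0 = false := by simpa using h0
        simp [hw, this]
      rw [hz]
  rw [Finset.sum_congr rfl (fun g _ => hterm g)]
  rw [genSum (n+2) (fun _ => F) (fun _ => G) w]
  have hfun : (fun i : Fin (n+2) => w i true • F + w i false • G)
      = (fun i : Fin (n+2) => if i = 0 ∨ i = Fin.last (n+1) then σ • F else σ • F + G) := by
    funext i
    by_cases hi : i = 0 ∨ i = Fin.last (n+1)
    · simp [hw, hi]
    · simp [hw, hi]
  rw [hfun, Mprod_ends]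

lemma keyFiltered (m : ℕ) (hm : 2 ≤ m) (h0 : 0 < m) (h1 : m - 1 < m) (F G : Matrix X X ℝ) :
    ∑ J ∈ univ.filter (fun J : Finset (Fin m) =>
        Even J.card ∧ (⟨0, h0⟩ : Fin m) ∈ J ∧ (⟨m-1, h1⟩ : Fin m) ∈ J),
        Mprod m (fun i => if i ∈ J then F else G)
      = (2⁻¹ : ℝ) • (F * ((F + G) ^ (m-2) + (G - F) ^ (m-2)) * F) := by
  classical
  obtain ⟨n, rfl⟩ : ∃ n, m = n + 2 := ⟨m - 2, by omega⟩
  have e0 : (⟨0, h0⟩ : Fin (n+2)) = 0 := rfl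
  have e1 : (⟨n+2-1, h1⟩ : Fin (n+2)) = Fin.last (n+1) := by
    apply Fin.ext; simp
  have e2 : n + 2 - 2 = n := by omega
  simp only [e0, e1, e2]
  have hA := endsSum n 1 F G
  have hB := endsSum n (-1) F G
  have hcomb : ∀ J : Finset (Fin (n+2)),
      (if Even J.card ∧ ((0:Fin (n+2)) ∈ J ∧ Fin.last (n+1) ∈ J) then (2:ℝ) else 0)
        = (if (0:Fin (n+2)) ∈ J ∧ Fin.last (n+1) ∈ J then (1:ℝ) ^ J.card else 0)
          + (if (0:Fin (n+2)) ∈ J ∧ Fin.last (n+1) ∈ J then (-1:ℝ) ^ J.card else 0) := by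
    intro J
    by_cases hJ : (0:Fin (n+2)) ∈ J ∧ Fin.last (n+1) ∈ J
    · by_cases he : Even J.card
      · rw [if_pos ⟨he, hJ⟩, if_pos hJ, if_pos hJ, one_pow, he.neg_one_pow]
        norm_num
      · rw [if_neg (fun h => he h.1), if_pos hJ, if_pos hJ, one_pow,
          (Nat.not_even_iff_odd.mp he).neg_one_pow]
        norm_num
    · rw [if_neg (fun h => hJ h.2), if_neg hJ, if_neg hJ]
      norm_num
  rw [Finset.sum_filter]
  have hsplit : ∀ J : Finset (Fin (n+2)),
      (if Even J.card ∧ ((0:Fin (n+2)) ∈ J ∧ Fin.last (n+1) ∈ J)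
          then Mprod (n+2) (fun i => if i ∈ J then F else G) else 0)
        = (2⁻¹:ℝ) • (((if (0:Fin (n+2)) ∈ J ∧ Fin.last (n+1) ∈ J then (1:ℝ) ^ J.card else 0)
              • Mprod (n+2) (fun i => if i ∈ J then F else G))
            + ((if (0:Fin (n+2)) ∈ J ∧ Fin.last (n+1) ∈ J then (-1:ℝ) ^ J.card else 0)
              • Mprod (n+2) (fun i => if i ∈ J then F else G))) := by
    intro J
    rw [← add_smul, ← hcomb J]
    by_cases hP : Even J.card ∧ ((0:Fin (n+2)) ∈ J ∧ Fin.last (n+1) ∈ J)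
    · rw [if_pos hP, if_pos hP, smul_smul]
      norm_num
    · rw [if_neg hP, if_neg hP, zero_smul, smul_zero]
  rw [Finset.sum_congr rfl (fun J _ => hsplit J), ← Finset.smul_sum]
  rw [Finset.sum_add_distrib, hA, hB]
  simp only [one_smul, neg_one_smul, neg_add_eq_sub]
  congr 1
  noncomm_ring

/-- Double sum of all entries of a matrix. -/
noncomputable def Qd {X : Type} [Fintype X] (M : Matrix X X ℝ) : ℝ := ∑ a, ∑ b, M a b

lemma Qd_smul (r : ℝ) (M : Matrix X X ℝ) : Qd (r • M) = r * Qd M := by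
  simp [Qd, Finset.mul_sum]

lemma Qd_sum {ι : Type*} (s : Finset ι) (f : ι → Matrix X X ℝ) :
    Qd (∑ i ∈ s, f i) = ∑ i ∈ s, Qd (f i) := by
  simp only [Qd, Matrix.sum_apply]
  rw [Finset.sum_congr rfl (fun a _ => Finset.sum_comm)]
  exact Finset.sum_comm

lemma Qd_eq_dot (M : Matrix X X ℝ) :
    Qd M = dotProduct (star (fun _ : X => (1:ℝ))) (M *ᵥ (fun _ => 1)) := by
  simp [Qd, dotProduct, Matrix.mulVec]

lemma sum_vecMul_ones (M : Matrix X X ℝ) :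
    (∑ b, ((fun _ => (1:ℝ)) ᵥ* M) b) = Qd M := by
  simp only [Qd, Matrix.vecMul, dotProduct, one_mul]
  exact Finset.sum_comm

lemma pathMoment_eq (m : ℕ) (J : Finset (Fin m)) (f₁ f₂ : X → X → ℝ) :
    pathMoment m J f₁ f₂
      = Qd (Mprod m (fun i => if i ∈ J then Matrix.of f₁ else Matrix.of f₂))
          / (Fintype.card X : ℝ) ^ (m+1) := by
  unfold pathMoment
  congr 1
  have h := walk_eq m (fun i => if i ∈ J then Matrix.of f₁ else Matrix.of f₂) (fun _ => 1)
  simp only [one_mul] at h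
  have hx : ∀ (x : Fin (m+1) → X) (i : Fin m),
      ((if i ∈ J then Matrix.of f₁ else Matrix.of f₂ : Matrix X X ℝ))
          (x i.castSucc) (x i.succ)
        = if i ∈ J then f₁ (x i.castSucc) (x i.succ) else f₂ (x i.castSucc) (x i.succ) := by
    intro x i; by_cases hJ : i ∈ J <;> simp [hJ]
  simp only [hx] at h
  rw [h, sum_vecMul_ones]

lemma sum_pathMoment_eq (m : ℕ) (hm : 2 ≤ m) (h0 : 0 < m) (h1 : m - 1 < m)
    (f₁ f₂ : X → X → ℝ) :
    ∑ J ∈ univ.filter (fun J : Finset (Fin m) =>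
        Even J.card ∧ (⟨0, h0⟩ : Fin m) ∈ J ∧ (⟨m-1, h1⟩ : Fin m) ∈ J),
        pathMoment m J f₁ f₂
      = 2⁻¹ * Qd (Matrix.of f₁ *
          ((Matrix.of f₁ + Matrix.of f₂) ^ (m-2) + (Matrix.of f₂ - Matrix.of f₁) ^ (m-2)) *
          Matrix.of f₁) / (Fintype.card X : ℝ) ^ (m+1) := by
  rw [Finset.sum_congr rfl (fun J _ => pathMoment_eq m J f₁ f₂), ← Finset.sum_div,
    ← Qd_sum, keyFiltered m hm h0 h1, Qd_smul]

/-- The weighted polynomial `ψ_N(c,x) = ∑_{j=0}^N (N+1-j) c^(N-j) x^j`. -/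
noncomputable def psiP (N : ℕ) (c x : ℝ) : ℝ :=
  ∑ j ∈ Finset.range (N+1), ((N+1-j : ℕ) : ℝ) * c^(N-j) * x^j

lemma psiP_succ (N : ℕ) (c x : ℝ) :
    psiP (N+1) c x = x * psiP N c x + ((N+2 : ℕ) : ℝ) * c^(N+1) := by
  unfold psiP
  rw [Finset.sum_range_succ']
  have h1 : ∀ j, ((N+1+1-(j+1) : ℕ) : ℝ) * c^(N+1-(j+1)) * x^(j+1)
      = x * (((N+1-j : ℕ) : ℝ) * c^(N-j) * x^j) := by
    intro j
    have e1 : N+1+1-(j+1) = N+1-j := by omega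
    have e2 : N+1-(j+1) = N-j := by omega
    rw [e1, e2, pow_succ]
    ring
  rw [Finset.sum_congr rfl (fun j _ => h1 j), ← Finset.mul_sum]
  have e0 : N+1+1-0 = N+2 := by omega
  have e0' : N+1-0 = N+1 := by omega
  rw [e0, e0', pow_zero, mul_one]

lemma psiP_identity (N : ℕ) (c x : ℝ) :
    (x - c)^2 * psiP N c x
      = x^(N+2) - ((N+2 : ℕ) : ℝ) * c^(N+1) * x + ((N+1 : ℕ) : ℝ) * c^(N+2) := by
  induction N with
  | zero =>
    simp only [psiP, Finset.range_one, Finset.sum_singleton]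
    norm_num
    ring
  | succ N ih =>
    rw [psiP_succ, mul_add, mul_left_comm, ih]
    push_cast
    ring

lemma psiP_nonneg (N : ℕ) (hN : Even N) (c : ℝ) (hc : 0 < c) (x : ℝ) : 0 ≤ psiP N c x := by
  rcases eq_or_ne x c with rfl | hx
  · unfold psiP
    apply Finset.sum_nonneg
    intro j _
    positivity
  · have h2 : (0:ℝ) < (x - c)^2 := by
      have : x - c ≠ 0 := sub_ne_zero.mpr hx
      positivity
    -- the key scalar inequality
    have key : 0 ≤ x^(N+2) - ((N+2 : ℕ) : ℝ) * c^(N+1) * x + ((N+1 : ℕ) : ℝ) * c^(N+2) := by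
      have hEe : Even (N+2) := hN.add (by decide)
      have habs : x^(N+2) = |x|^(N+2) := (hEe.pow_abs x).symm
      set s : ℝ := |x| / c with hs
      have hs0 : 0 ≤ s := div_nonneg (abs_nonneg x) hc.le
      have hcs : c * s = |x| := by
        rw [hs]
        field_simp
      have bern : 1 + ((N+2 : ℕ) : ℝ) * (s - 1) ≤ s ^ (N+2) := by
        have := one_add_mul_le_pow (a := s - 1) (by linarith) (N+2)
        simpa using this
      have hpow : c^(N+2) * s^(N+2) = |x|^(N+2) := by
        rw [← mul_pow, hcs]
      have hmul := mul_le_mul_of_nonneg_left bern (le_of_lt (pow_pos hc (N+2)))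
      rw [hpow] at hmul
      have hcss : c^(N+2) * s = c^(N+1) * |x| := by
        rw [pow_succ, mul_assoc, hcs]
      have expand : c^(N+2) * (1 + ((N+2 : ℕ) : ℝ) * (s - 1))
          = c^(N+2) + ((N+2 : ℕ) : ℝ) * (c^(N+2) * s) - ((N+2 : ℕ) : ℝ) * c^(N+2) := by
        ring
      rw [expand, hcss] at hmul
      have hxabs : ((N+2 : ℕ) : ℝ) * c^(N+1) * x ≤ ((N+2 : ℕ) : ℝ) * c^(N+1) * |x| := by
        apply mul_le_mul_of_nonneg_left (le_abs_self x)
        positivity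
      rw [habs]
      push_cast at hmul hxabs ⊢
      nlinarith [hmul, hxabs]
    have hpsi : psiP N c x
        = (x^(N+2) - ((N+2 : ℕ) : ℝ) * c^(N+1) * x + ((N+1 : ℕ) : ℝ) * c^(N+2)) / (x - c)^2 := by
      rw [eq_div_iff h2.ne', mul_comm]
      exact psiP_identity N c x
    rw [hpsi]
    exact div_nonneg key h2.le

open Matrix in
lemma psd_S (N : ℕ) (hN : Even N) (c : ℝ) (hc : 0 < c)
    (R : Matrix X X ℝ) (hR : R.IsHermitian) :
    (∑ j ∈ Finset.range (N+1), (((N+1-j : ℕ) : ℝ) * c^(N-j)) • R ^ j).PosSemidef := by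
  obtain ⟨V, e, hV1, hV2, hRe⟩ : ∃ (V : Matrix X X ℝ) (e : X → ℝ),
      V * star V = 1 ∧ star V * V = 1 ∧ R = V * Matrix.diagonal e * star V := by
    refine ⟨(hR.eigenvectorUnitary : Matrix X X ℝ), hR.eigenvalues,
      (Matrix.mem_unitaryGroup_iff).mp hR.eigenvectorUnitary.2,
      (Matrix.mem_unitaryGroup_iff').mp hR.eigenvectorUnitary.2, ?_⟩
    have hdiag : Matrix.diagonal (RCLike.ofReal ∘ hR.eigenvalues)
        = Matrix.diagonal hR.eigenvalues := by congr 1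
    conv_lhs => rw [hR.spectral_theorem]
    rw [hdiag]
    rw [Unitary.conjStarAlgAut_apply]
  have hpow : ∀ j : ℕ,
      R ^ j = V * Matrix.diagonal (fun i => e i ^ j) * star V := by
    intro j
    induction j with
    | zero =>
      rw [pow_zero, show Matrix.diagonal (fun i : X => e i ^ 0) = 1 from by
        simp [Matrix.diagonal_one], mul_one, hV1]
    | succ j ihj =>
      rw [pow_succ, ihj]
      conv_lhs => rw [hRe]
      rw [show V * Matrix.diagonal (fun i => e i ^ j) * star V *
            (V * Matrix.diagonal e * star V)
          = V * (Matrix.diagonal (fun i => e i ^ j) *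
              ((star V * V) * Matrix.diagonal e)) * star V from by
        simp only [mul_assoc]]
      rw [hV2, one_mul, Matrix.diagonal_mul_diagonal]
      have hf : (fun i : X => e i ^ j * e i) = fun i => e i ^ (j+1) := by
        funext i; rw [pow_succ]
      rw [hf]
  have hterm : ∀ j ∈ Finset.range (N+1), (((N+1-j : ℕ) : ℝ) * c^(N-j)) • R ^ j
      = V * ((((N+1-j : ℕ) : ℝ) * c^(N-j)) •
          Matrix.diagonal (fun i => e i ^ j)) * star V := by
    intro j _
    rw [hpow j, ← smul_mul_assoc, ← mul_smul_comm]
  have hdiagsum : (∑ j ∈ Finset.range (N+1), (((N+1-j : ℕ) : ℝ) * c^(N-j)) •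
        Matrix.diagonal (fun i => e i ^ j))
      = Matrix.diagonal (fun i => psiP N c (e i)) := by
    ext a b
    simp only [Matrix.sum_apply, Matrix.smul_apply, Matrix.diagonal_apply, smul_eq_mul]
    by_cases hab : a = b
    · subst hab
      simp [psiP, mul_assoc]
    · simp [hab]
  have hsum : (∑ j ∈ Finset.range (N+1), (((N+1-j : ℕ) : ℝ) * c^(N-j)) • R ^ j)
      = V * Matrix.diagonal (fun i => psiP N c (e i)) * star V := by
    rw [Finset.sum_congr rfl hterm, ← Finset.sum_mul, ← Finset.mul_sum, hdiagsum]
  rw [hsum]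
  have hdpsd : (Matrix.diagonal (fun i => psiP N c (e i))).PosSemidef :=
    Matrix.PosSemidef.diagonal (Pi.le_def.mpr fun i => psiP_nonneg N hN c hc _)
  have hfin := hdpsd.mul_mul_conjTranspose_same V
  rwa [← Matrix.star_eq_conjTranspose] at hfin

open Matrix in
lemma final_nonneg (N : ℕ) (hN : Even N) (c : ℝ) (hc : 0 < c) (n : ℕ) (hn : 0 < n)
    (F G : Matrix X X ℝ) (hF : F.IsHermitian) (hG : G.IsHermitian) :
    0 ≤ ∑ i ∈ Finset.range (N+1), ((N+1-i : ℕ) : ℝ) *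
        (c^(N-i) * (2⁻¹ * Qd (F * ((F + G) ^ i + (G - F) ^ i) * F) / (n : ℝ)^(2+i+1))) := by
  have hne : (n : ℝ) ≠ 0 := Nat.cast_ne_zero.mpr hn.ne'
  have hsm : ∀ (r : ℝ) (M : Matrix X X ℝ), M.IsHermitian → (r • M).IsHermitian := by
    intro r M hM
    show (r • M)ᴴ = r • M
    rw [Matrix.conjTranspose_smul, star_trivial, hM.eq]
  have hP : (((n:ℝ)⁻¹) • (F + G)).IsHermitian := hsm _ _ (hF.add hG)
  have hQ : (((n:ℝ)⁻¹) • (G - F)).IsHermitian := hsm _ _ (hG.sub hF)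
  have h1 := psd_S N hN c hc _ hP
  have h2 := psd_S N hN c hc _ hQ
  set S : Matrix X X ℝ := ∑ i ∈ Finset.range (N+1), (((N+1-i : ℕ) : ℝ) * c^(N-i)) •
      ((((n:ℝ)⁻¹) • (F + G)) ^ i + (((n:ℝ)⁻¹) • (G - F)) ^ i) with hS
  have hSps : S.PosSemidef := by
    rw [hS, show (∑ i ∈ Finset.range (N+1), (((N+1-i : ℕ) : ℝ) * c^(N-i)) •
        ((((n:ℝ)⁻¹) • (F + G)) ^ i + (((n:ℝ)⁻¹) • (G - F)) ^ i))
        = (∑ i ∈ Finset.range (N+1), (((N+1-i:ℕ):ℝ) * c^(N-i)) • (((n:ℝ)⁻¹) • (F + G)) ^ i)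
          + (∑ i ∈ Finset.range (N+1), (((N+1-i:ℕ):ℝ) * c^(N-i)) • (((n:ℝ)⁻¹) • (G - F)) ^ i) from by
      rw [← Finset.sum_add_distrib]
      exact Finset.sum_congr rfl fun i _ => smul_add _ _ _]
    exact h1.add h2
  have hFS := hSps.mul_mul_conjTranspose_same F
  rw [hF.eq] at hFS
  have hQd : 0 ≤ Qd (F * S * F) := by
    rw [Qd_eq_dot]
    exact hFS.dotProduct_mulVec_nonneg (fun _ => 1)
  have hexp : F * S * F = ∑ i ∈ Finset.range (N+1),
      ((((N+1-i : ℕ) : ℝ) * c^(N-i)) * (((n:ℝ)⁻¹))^i) •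
        (F * ((F + G) ^ i + (G - F) ^ i) * F) := by
    rw [hS, Finset.mul_sum, Finset.sum_mul]
    refine Finset.sum_congr rfl fun i _ => ?_
    rw [smul_pow, smul_pow, ← smul_add, smul_smul, mul_smul_comm, smul_mul_assoc]
  have hsum2 : Qd (F * S * F) = ∑ i ∈ Finset.range (N+1),
      ((((N+1-i : ℕ) : ℝ) * c^(N-i)) * (((n:ℝ)⁻¹))^i) *
        Qd (F * ((F + G) ^ i + (G - F) ^ i) * F) := by
    rw [hexp, Qd_sum]
    exact Finset.sum_congr rfl fun i _ => Qd_smul _ _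
  have hgoal : (∑ i ∈ Finset.range (N+1), ((N+1-i : ℕ) : ℝ) *
        (c^(N-i) * (2⁻¹ * Qd (F * ((F + G) ^ i + (G - F) ^ i) * F) / (n : ℝ)^(2+i+1))))
      = 2⁻¹ * ((n:ℝ)⁻¹)^3 * Qd (F * S * F) := by
    rw [hsum2, Finset.mul_sum]
    refine Finset.sum_congr rfl fun i _ => ?_
    have hp : ((n : ℝ))^(2+i+1) = (n:ℝ)^3 * (n:ℝ)^i := by
      rw [show 2+i+1 = 3+i from by omega, pow_add]
    rw [hp]
    field_simp
    rw [one_div, inv_pow, mul_assoc _ ((n:ℝ) ^ i), mul_inv_cancel₀ (pow_ne_zero _ hne), mul_one]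
  rw [hgoal]
  exact mul_nonneg (by positivity) hQd

end Aux

/-- The final step in the proof of Lemma 3.4: the weighted sum of the quantities `T_m`
is nonnegative. -/
theorem weighted_T_sum_nonneg (X : Type) [Fintype X] [Nonempty X] (γ f : X → X → ℝ)
    (hγs : ∀ a b, γ a b = γ b a) (hγ01 : ∀ a b, γ a b = 0 ∨ γ a b = 1)
    (hfs : ∀ a b, f a b = f b a) (hfγ : ∀ a b, |f a b| ≤ γ a b)
    (k : ℕ) (hk : 1 ≤ k) (p z : ℝ) (hp : 0 < p) (hz0 : 0 < z) (hz1 : z ≤ 1)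
    (T : ℕ → ℝ) (hT0 : T 0 = 0) (hT1 : T 1 = 0)
    (hTm : ∀ m, ∀ _ : 2 ≤ m, ∀ _ : m ≤ 2 * k,
      T m = (p * z) ^ (2 * k - m) *
        ∑ J ∈ (Finset.univ : Finset (Finset (Fin m))).filter
            (fun J => Even J.card ∧ (⟨0, by omega⟩ : Fin m) ∈ J ∧ (⟨m - 1, by omega⟩ : Fin m) ∈ J),
          pathMoment m J f (fun a b => z * γ a b)) :
    0 ≤ ∑ i ∈ Finset.Icc 1 (2 * k), ((2 * k + 1 - i : ℕ) : ℝ) * T i := by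
  classical
  have hc0 : 0 < p * z := mul_pos hp hz0
  set N : ℕ := 2*k - 2 with hN
  have hNeven : Even N := ⟨k-1, by omega⟩
  have h1mem : 1 ∈ Finset.Icc 1 (2*k) := by
    simp only [Finset.mem_Icc]
    omega
  rw [← Finset.add_sum_erase _ _ h1mem, hT1, mul_zero, zero_add, Finset.Icc_erase_left]
  have hre : ∑ m ∈ Finset.Ioc 1 (2*k), ((2*k+1-m : ℕ) : ℝ) * T m
      = ∑ i ∈ Finset.range (N+1), ((2*k+1-(2+i) : ℕ) : ℝ) * T (2+i) := by
    refine Finset.sum_nbij' (fun m => m - 2) (fun i => 2 + i) ?_ ?_ ?_ ?_ ?_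
    · intro a ha
      simp only [Finset.mem_Ioc] at ha
      simp only [Finset.mem_range]
      omega
    · intro a ha
      simp only [Finset.mem_range] at ha
      simp only [Finset.mem_Ioc]
      omega
    · intro a ha
      simp only [Finset.mem_Ioc] at ha
      show 2 + (a - 2) = a
      omega
    · intro a _
      show 2 + a - 2 = a
      omega
    · intro a ha
      simp only [Finset.mem_Ioc] at ha
      show ((2*k+1-a : ℕ) : ℝ) * T a = ((2*k+1-(2+(a-2)) : ℕ) : ℝ) * T (2+(a-2))
      rw [show 2+(a-2) = a from by omega]
  rw [hre]
  have hstep : ∀ i ∈ Finset.range (N+1), ((2*k+1-(2+i) : ℕ) : ℝ) * T (2+i)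
      = ((N+1-i : ℕ) : ℝ) * ((p*z)^(N-i) * (2⁻¹ *
          Qd (Matrix.of f * ((Matrix.of f + Matrix.of (fun a b => z * γ a b)) ^ i
            + (Matrix.of (fun a b => z * γ a b) - Matrix.of f) ^ i) * Matrix.of f)
          / (Fintype.card X : ℝ)^(2+i+1))) := by
    intro i hi
    rw [Finset.mem_range] at hi
    have h2 : 2 ≤ 2+i := by omega
    have hle : 2+i ≤ 2*k := by omega
    rw [hTm (2+i) h2 hle]
    rw [sum_pathMoment_eq (2+i) h2 (by omega) (by omega) f (fun a b => z * γ a b)]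
    have e1 : 2+i-2 = i := by omega
    have e2 : 2*k-(2+i) = N-i := by omega
    have e3 : 2*k+1-(2+i) = N+1-i := by omega
    rw [e1, e2, e3]
  rw [Finset.sum_congr rfl hstep]
  have hF : (Matrix.of f).IsHermitian := by
    show (Matrix.of f).conjTranspose = Matrix.of f
    ext a b
    simp [Matrix.conjTranspose_apply, hfs a b]
  have hG : (Matrix.of (fun a b => z * γ a b)).IsHermitian := by
    show (Matrix.of (fun a b => z * γ a b)).conjTranspose = Matrix.of (fun a b => z * γ a b)
    ext a b
    simp [Matrix.conjTranspose_apply, hγs a b]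
  exact final_nonneg N hNeven (p*z) hc0 (Fintype.card X) Fintype.card_pos _ _ hF hG
end
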